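/- arXiv:1105.5471 — 3 statements merged into one kernel-verified Lean document; each statement's English description precedes it below -/
import Mathlib

section
/- Let a be an amplitude of order m′ with m′ ≤ −4, and define a₂(s,x,y,p) := ∫_ℝ e^{isσ} a(s,x,y,p,σ) dσ (an absolutely convergent integral, since m′ ≤ −4). Then, as ħ → 0⁺, ∫_{ℝ^n} u_ħ(x,x) dx = (2π)^{1−n} ħ^{1−n} ∫_{ℝ^n × ℝ^{n−1}} a₂(0, x, x, (0,p′)) dx dp′ + O(ħ^{2−n}); that is, there are constants C > 0 and ħ₀ > 0 such that for all 0 < ħ ≤ ħ₀ the absolute value of the difference of the two sides is at most C ħ^{2−n}. (Here (0,p′) denotes the momentum variable p with first component p₁ = 0; the function (x,p′) ↦ a₂(0,x,x,(0,p′)) is continuous with compact support.) -/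
open MeasureTheory Real

noncomputable section

/-- An *amplitude of order `m'`* in dimension `n+1`: a smooth function
`a(s,x,y,p,σ)`, compactly supported in `(s,x,y,p)`, satisfying symbol estimates
of order `m'` in `σ`. -/
def IsAmplitude (n : ℕ) (m' : ℝ)
    (a : (ℝ × (Fin (n+1) → ℝ) × (Fin (n+1) → ℝ) × (Fin (n+1) → ℝ)) → ℝ → ℂ) : Prop :=
  ContDiff ℝ (⊤ : ℕ∞)
      (fun q : (ℝ × (Fin (n+1) → ℝ) × (Fin (n+1) → ℝ) × (Fin (n+1) → ℝ)) × ℝ => a q.1 q.2) ∧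
  (∃ K : Set (ℝ × (Fin (n+1) → ℝ) × (Fin (n+1) → ℝ) × (Fin (n+1) → ℝ)),
      IsCompact K ∧ ∀ w σ, w ∉ K → a w σ = 0) ∧
  ∀ k γ : ℕ, ∃ C : ℝ,
    ∀ w σ, ‖iteratedFDeriv ℝ k (fun w' => iteratedDeriv γ (a w') σ) w‖
      ≤ C * (1 + |σ|) ^ (m' - (γ : ℝ))

/-- The operator `1 + D_s²` where `D_s = -i ∂/∂s`, i.e. `f ↦ f - f''`. -/
def oneAddDsq (f : ℝ → ℂ) : ℝ → ℂ := fun s => f s - deriv (deriv f) s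

/-- The regularized integrand defining `u_ℏ`. -/
def oscIntegrand (n : ℕ)
    (a : (ℝ × (Fin (n+1) → ℝ) × (Fin (n+1) → ℝ) × (Fin (n+1) → ℝ)) → ℝ → ℂ)
    (ℏ : ℝ) (x y : Fin (n+1) → ℝ) (K : ℕ) :
    ℝ × (Fin (n+1) → ℝ) × ℝ → ℂ :=
  fun q =>
    Complex.exp (Complex.I *
        Complex.ofReal (ℏ⁻¹ * (∑ i, (x i - y i) * q.2.1 i) + q.1 * q.2.2)) *
    (Complex.ofReal (1 + q.2.2 ^ 2))⁻¹ ^ K *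
    (oneAddDsq^[K]
        (fun s => Complex.exp (-Complex.I * Complex.ofReal (ℏ⁻¹ * s * q.2.1 0)) *
          a (s, x, y, q.2.1) q.2.2)) q.1

/-- The kernel `u_ℏ(x,y)`, defined by the regularized oscillatory integral with
the choice `K = ⌈m'/2 + 1⌉₊` (any integer `K ≥ m'/2 + 1` gives the same value). -/
def uh (n : ℕ) (m' : ℝ)
    (a : (ℝ × (Fin (n+1) → ℝ) × (Fin (n+1) → ℝ) × (Fin (n+1) → ℝ)) → ℝ → ℂ)
    (ℏ : ℝ) (x y : Fin (n+1) → ℝ) : ℂ :=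
  Complex.ofReal ((2 * π * ℏ) ^ (-((n : ℤ) + 1))) *
    ∫ q, oscIntegrand n a ℏ x y (⌈m' / 2 + 1⌉₊) q


/-- `a₂(s,x,y,p) := ∫ e^{isσ} a(s,x,y,p,σ) dσ`. -/
def aTwo (n : ℕ)
    (a : (ℝ × (Fin (n+1) → ℝ) × (Fin (n+1) → ℝ) × (Fin (n+1) → ℝ)) → ℝ → ℂ)
    (w : ℝ × (Fin (n+1) → ℝ) × (Fin (n+1) → ℝ) × (Fin (n+1) → ℝ)) : ℂ :=
  ∫ σ : ℝ, Complex.exp (Complex.I * Complex.ofReal (w.1 * σ)) * a w σ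


namespace Stmt7

set_option maxHeartbeats 1000000

open Complex FourierTransform Metric

variable {n : ℕ}

abbrev WW (n : ℕ) : Type := ℝ × (Fin (n+1) → ℝ) × (Fin (n+1) → ℝ) × (Fin (n+1) → ℝ)

/-- weight `(1+|σ|)^m'` -/
def wt (m' σ : ℝ) : ℝ := (1 + |σ|) ^ m'

lemma one_add_abs_pos (σ : ℝ) : (0:ℝ) < 1 + |σ| := by positivity

lemma one_le_one_add_abs (σ : ℝ) : (1:ℝ) ≤ 1 + |σ| := by
  have := abs_nonneg σ; linarith

lemma wt_pos (m' σ : ℝ) : 0 < wt m' σ := Real.rpow_pos_of_pos (one_add_abs_pos σ) _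

lemma wt_nonneg (m' σ : ℝ) : 0 ≤ wt m' σ := (wt_pos m' σ).le

lemma wt_le_one {m' : ℝ} (hm : m' ≤ 0) (σ : ℝ) : wt m' σ ≤ 1 :=
  Real.rpow_le_one_of_one_le_of_nonpos (one_le_one_add_abs σ) hm

lemma wt_integrable {e : ℝ} (he : e ≤ -2) : Integrable (wt e) := by
  have h1 : (Module.finrank ℝ ℝ : ℝ) < -e := by
    simp only [Module.finrank_self, Nat.cast_one]; linarith
  have h := integrable_one_add_norm (E := ℝ) (μ := volume) h1
  have : (fun x : ℝ => (1 + ‖x‖) ^ (-(-e))) = wt e := by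
    funext x; simp [wt, Real.norm_eq_abs]
  rwa [this] at h

lemma wt_mul_one_add (m' σ : ℝ) : wt m' σ * (1 + |σ|) = wt (m' + 1) σ :=
  (Real.rpow_add_one (ne_of_gt (one_add_abs_pos σ)) m').symm

/-- decay kernel `(1+|ξ|)⁻³` -/
def dk (ξ : ℝ) : ℝ := ((1 + |ξ|) ^ (3:ℕ))⁻¹

def dk2 (ξ : ℝ) : ℝ := ((1 + |ξ|) ^ (2:ℕ))⁻¹

lemma dk_nonneg (ξ : ℝ) : 0 ≤ dk ξ := by unfold dk; positivity

lemma dk_integrable : Integrable dk := by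
  have h : ((fun σ => wt (-3) σ) : ℝ → ℝ) = dk := by
    funext ξ
    rw [wt, dk, ← Real.rpow_natCast (1 + |ξ|) 3, ← Real.rpow_neg (one_add_abs_pos ξ).le]
    norm_num
  rw [← h]; exact wt_integrable (by norm_num)

lemma dk2_integrable : Integrable dk2 := by
  have h : ((fun σ => wt (-2) σ) : ℝ → ℝ) = dk2 := by
    funext ξ
    rw [wt, dk2, ← Real.rpow_natCast (1 + |ξ|) 2, ← Real.rpow_neg (one_add_abs_pos ξ).le]
    norm_num
  rw [← h]; exact wt_integrable (by norm_num)

lemma abs_mul_dk_le (c u : ℝ) : |u| * dk (u - c) ≤ dk2 (u - c) + |c| * dk (u - c) := by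
  have h1 : |u| ≤ |u - c| + |c| := by
    have := abs_sub_abs_le_abs_sub u c
    have := abs_abs_sub_abs_le_abs_sub u c
    calc |u| = |(u - c) + c| := by ring_nf
    _ ≤ |u - c| + |c| := abs_add_le _ _
  have h2 : |u - c| * dk (u - c) ≤ dk2 (u - c) := by
    unfold dk dk2
    rw [inv_eq_one_div, inv_eq_one_div, mul_one_div, div_le_div_iff₀ (by positivity) (by positivity)]
    have hA : (0:ℝ) ≤ 1 + |u - c| := by positivity
    nlinarith [abs_nonneg (u - c), sq_nonneg (1 + |u - c|)]
  calc |u| * dk (u - c) ≤ (|u - c| + |c|) * dk (u - c) := by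
        apply mul_le_mul_of_nonneg_right h1 (dk_nonneg _)
    _ = |u - c| * dk (u - c) + |c| * dk (u - c) := by ring
    _ ≤ dk2 (u - c) + |c| * dk (u - c) := by linarith

/-- A smooth compactly-supported symbol family of order `m'`. -/
structure Nice (n : ℕ) (m' R : ℝ) (f : WW n → ℝ → ℂ) : Prop where
  smooth : ContDiff ℝ (⊤ : ℕ∞) fun q : WW n × ℝ => f q.1 q.2
  supp : ∀ w σ, R < ‖w‖ → f w σ = 0
  bound : ∀ k : ℕ, ∃ C : ℝ, 0 ≤ C ∧ ∀ w σ,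
    ‖iteratedFDeriv ℝ k (fun w' => f w' σ) w‖ ≤ C * wt m' σ

variable {m' R : ℝ} {f : WW n → ℝ → ℂ}

lemma Nice.sec_smooth (hf : Nice n m' R f) (σ : ℝ) :
    ContDiff ℝ (⊤ : ℕ∞) (fun w => f w σ) :=
  hf.smooth.comp (contDiff_id.prodMk contDiff_const)

lemma Nice.cont (hf : Nice n m' R f) : Continuous fun q : WW n × ℝ => f q.1 q.2 :=
  hf.smooth.continuous

lemma Nice.norm_le (hf : Nice n m' R f) :
    ∃ C : ℝ, 0 ≤ C ∧ ∀ w σ, ‖f w σ‖ ≤ C * wt m' σ := by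
  obtain ⟨C, hC0, hC⟩ := hf.bound 0
  exact ⟨C, hC0, fun w σ => by
    have := hC w σ; rwa [norm_iteratedFDeriv_zero] at this⟩

lemma Nice.lip (hf : Nice n m' R f) :
    ∃ C : ℝ, 0 ≤ C ∧ ∀ w w' σ, ‖f w σ - f w' σ‖ ≤ C * ‖w - w'‖ * wt m' σ := by
  obtain ⟨C, hC0, hC⟩ := hf.bound 1
  refine ⟨C, hC0, fun w w' σ => ?_⟩
  have hd : ∀ z : WW n, ‖fderiv ℝ (fun w'' => f w'' σ) z‖ ≤ C * wt m' σ := by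
    intro z
    refine ContinuousLinearMap.opNorm_le_bound _ (mul_nonneg hC0 (wt_nonneg _ _)) fun v => ?_
    have : fderiv ℝ (fun w'' => f w'' σ) z v
        = iteratedFDeriv ℝ 1 (fun w'' => f w'' σ) z (fun _ => v) := by
      rw [iteratedFDeriv_one_apply]
    rw [this]
    calc ‖iteratedFDeriv ℝ 1 (fun w'' => f w'' σ) z (fun _ => v)‖
        ≤ ‖iteratedFDeriv ℝ 1 (fun w'' => f w'' σ) z‖ * ∏ _i : Fin 1, ‖v‖ :=
          ContinuousMultilinearMap.le_opNorm _ _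
      _ ≤ C * wt m' σ * ‖v‖ := by
          simp only [Finset.prod_const, Finset.card_univ, Fintype.card_fin, pow_one]
          exact mul_le_mul_of_nonneg_right (hC z σ) (norm_nonneg v)
  have := Convex.norm_image_sub_le_of_norm_fderiv_le (𝕜 := ℝ)
    (f := fun w'' => f w'' σ) (C := C * wt m' σ) (s := Set.univ)
    (fun z _ => ((hf.sec_smooth σ).differentiable (by simp)).differentiableAt)
    (fun z _ => hd z) convex_univ (Set.mem_univ w') (Set.mem_univ w)
  calc ‖f w σ - f w' σ‖ ≤ C * wt m' σ * ‖w - w'‖ := this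
    _ = C * ‖w - w'‖ * wt m' σ := by ring

/-- direction of the `s` variable -/
def dsDir (n : ℕ) : WW n := (1, 0, 0, 0)

lemma norm_dsDir : ‖dsDir n‖ = 1 := by
  simp [dsDir, Prod.norm_def]

/-- partial derivative in `s` -/
def Ds (f : WW n → ℝ → ℂ) : WW n → ℝ → ℂ :=
  fun w σ => fderiv ℝ (fun w' => f w' σ) w (dsDir n)

lemma fderiv_section {F : WW n × ℝ → ℂ} (hF : ContDiff ℝ (⊤ : ℕ∞) F) (w : WW n)
    (σ : ℝ) (v : WW n) :
    fderiv ℝ (fun w' => F (w', σ)) w v = fderiv ℝ F (w, σ) (v, 0) := by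
  have h1 : HasFDerivAt F (fderiv ℝ F (w, σ)) (w, σ) :=
    (hF.differentiable (by simp) (w, σ)).hasFDerivAt
  have h2 : HasFDerivAt (fun w' : WW n => (w', σ))
      ((ContinuousLinearMap.id ℝ (WW n)).prod 0) w :=
    (hasFDerivAt_id w).prodMk (hasFDerivAt_const σ w)
  have h3 : HasFDerivAt (fun w' => F (w', σ))
      ((fderiv ℝ F (w, σ)).comp ((ContinuousLinearMap.id ℝ (WW n)).prod 0)) w := h1.comp w h2
  rw [h3.fderiv]
  simp

lemma Nice.ds (hf : Nice n m' R f) : Nice n m' R (Ds f) := by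
  constructor
  · -- smoothness
    have key : (fun q : WW n × ℝ => Ds f q.1 q.2)
        = fun q : WW n × ℝ => fderiv ℝ (fun q' : WW n × ℝ => f q'.1 q'.2) q (dsDir n, 0) := by
      funext q
      exact fderiv_section hf.smooth q.1 q.2 (dsDir n)
    rw [key]
    exact (hf.smooth.fderiv_right (by simp)).clm_apply contDiff_const
  · -- support
    intro w σ hw
    have hopen : IsOpen {z : WW n | R < ‖z‖} := isOpen_lt continuous_const continuous_norm
    have hev : (fun w' => f w' σ) =ᶠ[nhds w] (fun _ => (0:ℂ)) := by
      filter_upwards [hopen.mem_nhds hw] with z hz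
      exact hf.supp z σ hz
    unfold Ds
    rw [hev.fderiv_eq, fderiv_fun_const]
    simp
  · -- bounds
    intro k
    obtain ⟨C, hC0, hC⟩ := hf.bound (k + 1)
    refine ⟨C, hC0, fun w σ => ?_⟩
    set g : (WW n →L[ℝ] ℂ) →L[ℝ] ℂ := ContinuousLinearMap.apply ℝ ℂ (dsDir n) with hg
    have hgn : ‖g‖ ≤ 1 := by
      refine ContinuousLinearMap.opNorm_le_bound _ zero_le_one fun L => ?_
      calc ‖g L‖ = ‖L (dsDir n)‖ := rfl
        _ ≤ ‖L‖ * ‖dsDir n‖ := L.le_opNorm _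
        _ = 1 * ‖L‖ := by rw [norm_dsDir]; ring
    have hsm : ContDiff ℝ (⊤ : ℕ∞) (fderiv ℝ fun w' => f w' σ) :=
      (hf.sec_smooth σ).fderiv_right (by simp)
    have heq : (fun w' => Ds f w' σ) = ⇑g ∘ (fderiv ℝ fun w' => f w' σ) := rfl
    rw [heq, g.iteratedFDeriv_comp_left (hsm.contDiffAt (x := w)) (by exact_mod_cast le_top)]
    calc ‖g.compContinuousMultilinearMap (iteratedFDeriv ℝ k (fderiv ℝ fun w' => f w' σ) w)‖
        ≤ ‖g‖ * ‖iteratedFDeriv ℝ k (fderiv ℝ fun w' => f w' σ) w‖ :=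
          ContinuousLinearMap.norm_compContinuousMultilinearMap_le _ _
      _ ≤ 1 * ‖iteratedFDeriv ℝ (k+1) (fun w' => f w' σ) w‖ := by
          rw [norm_iteratedFDeriv_fderiv]
          exact mul_le_mul_of_nonneg_right hgn (norm_nonneg _)
      _ ≤ C * wt m' σ := by rw [one_mul]; exact hC w σ

variable {x p : Fin (n+1) → ℝ} {σ : ℝ}

lemma Nice.hasDerivAt_slice (hf : Nice n m' R f) (x p : Fin (n+1) → ℝ) (σ s : ℝ) :
    HasDerivAt (fun s' => f (s', x, x, p) σ) (Ds f (s, x, x, p) σ) s := by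
  have h1 : HasFDerivAt (fun w => f w σ) (fderiv ℝ (fun w => f w σ) (s, x, x, p)) (s, x, x, p) :=
    (((hf.sec_smooth σ)).differentiable (by simp) _).hasFDerivAt
  have h2 : HasDerivAt (fun s' : ℝ => ((s', x, x, p) : WW n)) (dsDir n) s := by
    exact (hasDerivAt_id s).prodMk (hasDerivAt_const s (x, x, p))
  exact h1.comp_hasDerivAt s h2

/-! ### Slices along `s` and their Fourier transforms -/

variable (f) in
/-- the slice `s ↦ f (s,x,x,p) σ` -/
def slice (x p : Fin (n+1) → ℝ) (σ : ℝ) : ℝ → ℂ := fun s => f (s, x, x, p) σ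

lemma norm_s_le (s : ℝ) (x y p : Fin (n+1) → ℝ) : |s| ≤ ‖((s, x, y, p) : WW n)‖ := by
  simpa using norm_fst_le ((s, x, y, p) : WW n)

lemma norm_x_le (s : ℝ) (x y p : Fin (n+1) → ℝ) : ‖x‖ ≤ ‖((s, x, y, p) : WW n)‖ := by
  have h1 := norm_snd_le ((s, x, y, p) : WW n)
  have h2 := norm_fst_le ((x, y, p) : (Fin (n+1) → ℝ) × (Fin (n+1) → ℝ) × (Fin (n+1) → ℝ))
  exact le_trans h2 h1

lemma norm_p_le (s : ℝ) (x y p : Fin (n+1) → ℝ) : ‖p‖ ≤ ‖((s, x, y, p) : WW n)‖ := by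
  have h1 := norm_snd_le ((s, x, y, p) : WW n)
  have h2 := norm_snd_le ((x, y, p) : (Fin (n+1) → ℝ) × (Fin (n+1) → ℝ) × (Fin (n+1) → ℝ))
  have h3 := norm_snd_le ((y, p) : (Fin (n+1) → ℝ) × (Fin (n+1) → ℝ))
  exact le_trans (le_trans h3 h2) h1

lemma norm_ptail_le (s : ℝ) (x y : Fin (n+1) → ℝ) (t : ℝ) (p' : Fin n → ℝ) :
    ‖p'‖ ≤ ‖((s, x, y, Fin.cons t p') : WW n)‖ := by
  refine le_trans ?_ (norm_p_le s x y (Fin.cons t p'))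
  refine (pi_norm_le_iff_of_nonneg (norm_nonneg _)).2 fun j => ?_
  simpa using norm_le_pi_norm (Fin.cons t p' : Fin (n+1) → ℝ) j.succ

lemma Nice.slice_cont (hf : Nice n m' R f) (x p : Fin (n+1) → ℝ) (σ : ℝ) :
    Continuous (slice f x p σ) := by
  have h : Continuous fun s : ℝ => ((((s, x, x, p)) : WW n), σ) := by fun_prop
  exact hf.cont.comp h

lemma Nice.slice_supp (hf : Nice n m' R f) (x p : Fin (n+1) → ℝ) (σ : ℝ) :
    ∀ s, R < |s| → slice f x p σ s = 0 := fun s hs =>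
  hf.supp _ σ (lt_of_lt_of_le hs (norm_s_le s x x p))

lemma Nice.slice_hcs (hf : Nice n m' R f) (x p : Fin (n+1) → ℝ) (σ : ℝ) :
    HasCompactSupport (slice f x p σ) := by
  apply HasCompactSupport.intro (isCompact_Icc (a := -R) (b := R))
  intro s hs
  apply hf.slice_supp x p σ
  rw [Set.mem_Icc, not_and_or] at hs
  rw [lt_abs]
  rcases hs with h | h
  · push_neg at h; right; linarith
  · push_neg at h; left; exact h

lemma Nice.slice_integrable (hf : Nice n m' R f) (x p : Fin (n+1) → ℝ) (σ : ℝ) :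
    Integrable (slice f x p σ) :=
  (hf.slice_cont x p σ).integrable_of_hasCompactSupport (hf.slice_hcs x p σ)

lemma Nice.slice_norm_le (hf : Nice n m' R f) {C : ℝ}
    (hC : ∀ w σ, ‖f w σ‖ ≤ C * wt m' σ) (x p : Fin (n+1) → ℝ) (σ : ℝ) (s : ℝ) :
    ‖slice f x p σ s‖ ≤ C * wt m' σ := hC _ σ

/-- Fourier transform of a derivative. -/
lemma fourier_deriv_eq {g g' : ℝ → ℂ} (hd : ∀ s, HasDerivAt g (g' s) s)
    (hg : Integrable g) (hg' : Integrable g') :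
    𝓕 g' = fun (ξ : ℝ) => (2 * ↑π * Complex.I * ↑ξ) • 𝓕 g ξ := by
  have h1 : deriv g = g' := funext fun s => (hd s).deriv
  rw [← h1]
  exact Real.fourier_deriv hg (fun s => (hd s).differentiableAt) (h1 ▸ hg')

/-- basic bound on the Fourier transform of a compactly supported function. -/
lemma fourier_norm_le {g : ℝ → ℂ} {R M : ℝ} (hR : 0 ≤ R)
    (hsupp : ∀ s, R < |s| → g s = 0) (hb : ∀ s, ‖g s‖ ≤ M) (hg : Integrable g) (ξ : ℝ) :
    ‖𝓕 g ξ‖ ≤ 2 * R * M := by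
  have hM : 0 ≤ M := le_trans (norm_nonneg _) (hb 0)
  rw [Real.fourier_real_eq]
  refine le_trans (norm_integral_le_integral_norm _) ?_
  have hnorm : (fun s : ℝ => ‖(𝐞 (-(s * ξ)) : Circle) • g s‖) = fun s => ‖g s‖ := by
    funext s; simp
  rw [hnorm]
  have h2 : Integrable (Set.indicator (Set.Icc (-R) R) (fun _ : ℝ => M)) := by
    rw [integrable_indicator_iff measurableSet_Icc]
    exact integrableOn_const measure_Icc_lt_top.ne
  have hle : ∀ s : ℝ, ‖g s‖ ≤ Set.indicator (Set.Icc (-R) R) (fun _ => M) s := by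
    intro s
    by_cases hs : s ∈ Set.Icc (-R) R
    · rw [Set.indicator_of_mem hs]; exact hb s
    · rw [Set.indicator_of_notMem hs]
      rw [Set.mem_Icc, not_and_or] at hs
      have : R < |s| := by
        rw [lt_abs]
        rcases hs with h | h
        · push_neg at h; right; linarith
        · push_neg at h; left; exact h
      rw [hsupp s this, norm_zero]
  calc ∫ s, ‖g s‖ ≤ ∫ s, Set.indicator (Set.Icc (-R) R) (fun _ => M) s :=
        integral_mono hg.norm h2 hle
    _ = 2 * R * M := by
        rw [integral_indicator measurableSet_Icc, setIntegral_const, Real.volume_real_Icc,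
          max_eq_left (by linarith), smul_eq_mul]
        ring

lemma norm_twoPiI (ξ : ℝ) : ‖(2 * ↑π * Complex.I * ↑ξ : ℂ)‖ = 2 * π * |ξ| := by
  simp [norm_mul, abs_of_pos Real.pi_pos]

lemma one_add_cube (t : ℝ) (ht : 0 ≤ t) : (1 + t) ^ (3:ℕ) ≤ 8 * (1 + t ^ (3:ℕ)) := by
  nlinarith [sq_nonneg (t - 1), mul_nonneg ht (sq_nonneg (t - 1)), sq_nonneg t]

/-- combine a plain bound and a 3rd-derivative bound into decay. -/
lemma decay_combine {F0 F3 : ℂ} {ξ M0 M3 : ℝ} (hM0 : ‖F0‖ ≤ M0) (hM3 : ‖F3‖ ≤ M3)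
    (hrel : F3 = (2 * ↑π * Complex.I * ↑ξ : ℂ) • ((2 * ↑π * Complex.I * ↑ξ : ℂ) •
      ((2 * ↑π * Complex.I * ↑ξ : ℂ) • F0))) :
    ‖F0‖ ≤ (8 * M0 + 8 * M3) * dk ξ := by
  have hN : 0 ≤ ‖F0‖ := norm_nonneg _
  have hM0' : 0 ≤ M0 := le_trans hN hM0
  have hM3' : 0 ≤ M3 := le_trans (norm_nonneg _) hM3
  have hF3 : ‖F3‖ = (2 * π * |ξ|) ^ (3:ℕ) * ‖F0‖ := by
    rw [hrel, norm_smul, norm_smul, norm_smul, norm_twoPiI]; ring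
  have h2pi : (1:ℝ) ≤ (2 * π) ^ (3:ℕ) := by
    have : (1:ℝ) ≤ 2 * π := by nlinarith [Real.pi_gt_three]
    calc (1:ℝ) = 1 ^ (3:ℕ) := by norm_num
      _ ≤ (2 * π) ^ (3:ℕ) := pow_le_pow_left₀ (by norm_num) this 3
  have hcube : |ξ| ^ (3:ℕ) * ‖F0‖ ≤ M3 := by
    have h1 : |ξ| ^ (3:ℕ) * ‖F0‖ ≤ (2 * π) ^ (3:ℕ) * (|ξ| ^ (3:ℕ) * ‖F0‖) := by
      nlinarith [mul_nonneg (pow_nonneg (abs_nonneg ξ) 3) hN]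
    have h2 : (2 * π) ^ (3:ℕ) * (|ξ| ^ (3:ℕ) * ‖F0‖) = (2 * π * |ξ|) ^ (3:ℕ) * ‖F0‖ := by ring
    calc |ξ| ^ (3:ℕ) * ‖F0‖ ≤ (2 * π * |ξ|) ^ (3:ℕ) * ‖F0‖ := by rw [← h2]; exact h1
      _ = ‖F3‖ := hF3.symm
      _ ≤ M3 := hM3
  have hA : (0:ℝ) < (1 + |ξ|) ^ (3:ℕ) := by positivity
  have key : (1 + |ξ|) ^ (3:ℕ) * ‖F0‖ ≤ 8 * M0 + 8 * M3 := by
    calc (1 + |ξ|) ^ (3:ℕ) * ‖F0‖ ≤ 8 * (1 + |ξ| ^ (3:ℕ)) * ‖F0‖ :=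
          mul_le_mul_of_nonneg_right (one_add_cube _ (abs_nonneg ξ)) hN
      _ = 8 * ‖F0‖ + 8 * (|ξ| ^ (3:ℕ) * ‖F0‖) := by ring
      _ ≤ 8 * M0 + 8 * M3 := by
          have := hM0; have := hcube; nlinarith
  unfold dk
  have key2 : ‖F0‖ ≤ (8 * M0 + 8 * M3) / (1 + |ξ|) ^ (3:ℕ) :=
    (le_div_iff₀ hA).2 (by rw [mul_comm]; exact key)
  calc ‖F0‖ ≤ (8 * M0 + 8 * M3) / (1 + |ξ|) ^ (3:ℕ) := key2
    _ = (8 * M0 + 8 * M3) * ((1 + |ξ|) ^ (3:ℕ))⁻¹ := by rw [div_eq_mul_inv]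

lemma Nice.fourier_decay (hf : Nice n m' R f) (hR : 0 ≤ R) :
    ∃ C : ℝ, 0 ≤ C ∧ ∀ x p σ ξ, ‖𝓕 (slice f x p σ) ξ‖ ≤ C * wt m' σ * dk ξ := by
  have hf1 : Nice n m' R (Ds f) := hf.ds
  have hf2 : Nice n m' R (Ds (Ds f)) := hf1.ds
  have hf3 : Nice n m' R (Ds (Ds (Ds f))) := hf2.ds
  obtain ⟨C0, hC00, hC0⟩ := hf.norm_le
  obtain ⟨C3, hC30, hC3⟩ := hf3.norm_le
  refine ⟨8 * (2 * R * C0) + 8 * (2 * R * C3), by positivity, fun x p σ ξ => ?_⟩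
  have e1 : 𝓕 (slice (Ds f) x p σ) = fun (ξ : ℝ) => (2 * ↑π * Complex.I * ↑ξ) • 𝓕 (slice f x p σ) ξ :=
    fourier_deriv_eq (hf.hasDerivAt_slice x p σ) (hf.slice_integrable x p σ)
      (hf1.slice_integrable x p σ)
  have e2 : 𝓕 (slice (Ds (Ds f)) x p σ)
      = fun (ξ : ℝ) => (2 * ↑π * Complex.I * ↑ξ) • 𝓕 (slice (Ds f) x p σ) ξ :=
    fourier_deriv_eq (hf1.hasDerivAt_slice x p σ) (hf1.slice_integrable x p σ)
      (hf2.slice_integrable x p σ)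
  have e3 : 𝓕 (slice (Ds (Ds (Ds f))) x p σ)
      = fun (ξ : ℝ) => (2 * ↑π * Complex.I * ↑ξ) • 𝓕 (slice (Ds (Ds f)) x p σ) ξ :=
    fourier_deriv_eq (hf2.hasDerivAt_slice x p σ) (hf2.slice_integrable x p σ)
      (hf3.slice_integrable x p σ)
  have hM0 : ‖𝓕 (slice f x p σ) ξ‖ ≤ 2 * R * (C0 * wt m' σ) :=
    fourier_norm_le hR (hf.slice_supp x p σ) (fun s => hC0 _ σ) (hf.slice_integrable x p σ) ξ
  have hM3 : ‖𝓕 (slice (Ds (Ds (Ds f))) x p σ) ξ‖ ≤ 2 * R * (C3 * wt m' σ) :=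
    fourier_norm_le hR (hf3.slice_supp x p σ) (fun s => hC3 _ σ) (hf3.slice_integrable x p σ) ξ
  have hrel : 𝓕 (slice (Ds (Ds (Ds f))) x p σ) ξ
      = (2 * ↑π * Complex.I * ↑ξ : ℂ) • ((2 * ↑π * Complex.I * ↑ξ : ℂ) •
        ((2 * ↑π * Complex.I * ↑ξ : ℂ) • 𝓕 (slice f x p σ) ξ)) := by
    rw [e3, e2, e1]
  have := decay_combine hM0 hM3 hrel
  calc ‖𝓕 (slice f x p σ) ξ‖
      ≤ (8 * (2 * R * (C0 * wt m' σ)) + 8 * (2 * R * (C3 * wt m' σ))) * dk ξ := this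
    _ = (8 * (2 * R * C0) + 8 * (2 * R * C3)) * wt m' σ * dk ξ := by ring

lemma fourier_sub {g h : ℝ → ℂ} (hg : Integrable g) (hh : Integrable h) (ξ : ℝ) :
    𝓕 (fun s => g s - h s) ξ = 𝓕 g ξ - 𝓕 h ξ := by
  rw [Real.fourier_eq, Real.fourier_eq, Real.fourier_eq, ← integral_sub]
  · congr 1; funext v; rw [smul_sub]
  · exact (Real.fourierIntegral_convergent_iff ξ).2 hg
  · exact (Real.fourierIntegral_convergent_iff ξ).2 hh

lemma norm_wsub (s : ℝ) (x p q : Fin (n+1) → ℝ) :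
    ‖((s, x, x, p) : WW n) - ((s, x, x, q) : WW n)‖ = ‖p - q‖ := by
  have h : ((s, x, x, p) : WW n) - ((s, x, x, q) : WW n) = (0, 0, 0, p - q) := by
    simp [Prod.ext_iff]
  rw [h]
  simp only [Prod.norm_def, norm_zero]
  rw [sup_eq_right.mpr (norm_nonneg _), sup_eq_right.mpr (norm_nonneg _),
    sup_eq_right.mpr (norm_nonneg _)]

lemma Nice.fourier_decay_sub (hf : Nice n m' R f) (hR : 0 ≤ R) :
    ∃ C : ℝ, 0 ≤ C ∧ ∀ x p q σ ξ,
      ‖𝓕 (slice f x p σ) ξ - 𝓕 (slice f x q σ) ξ‖ ≤ C * ‖p - q‖ * wt m' σ * dk ξ := by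
  have hf1 : Nice n m' R (Ds f) := hf.ds
  have hf2 : Nice n m' R (Ds (Ds f)) := hf1.ds
  have hf3 : Nice n m' R (Ds (Ds (Ds f))) := hf2.ds
  obtain ⟨L0, hL00, hL0⟩ := hf.lip
  obtain ⟨L3, hL30, hL3⟩ := hf3.lip
  refine ⟨8 * (2 * R * L0) + 8 * (2 * R * L3), by positivity, fun x p q σ ξ => ?_⟩
  set g0 : ℝ → ℂ := fun s => slice f x p σ s - slice f x q σ s with hg0
  set g1 : ℝ → ℂ := fun s => slice (Ds f) x p σ s - slice (Ds f) x q σ s with hg1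
  set g2 : ℝ → ℂ := fun s => slice (Ds (Ds f)) x p σ s - slice (Ds (Ds f)) x q σ s with hg2
  set g3 : ℝ → ℂ := fun s => slice (Ds (Ds (Ds f))) x p σ s - slice (Ds (Ds (Ds f))) x q σ s
    with hg3
  have hd0 : ∀ s, HasDerivAt g0 (g1 s) s := fun s =>
    (hf.hasDerivAt_slice x p σ s).sub (hf.hasDerivAt_slice x q σ s)
  have hd1 : ∀ s, HasDerivAt g1 (g2 s) s := fun s =>
    (hf1.hasDerivAt_slice x p σ s).sub (hf1.hasDerivAt_slice x q σ s)
  have hd2 : ∀ s, HasDerivAt g2 (g3 s) s := fun s =>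
    (hf2.hasDerivAt_slice x p σ s).sub (hf2.hasDerivAt_slice x q σ s)
  have hi0 : Integrable g0 := (hf.slice_integrable x p σ).sub (hf.slice_integrable x q σ)
  have hi1 : Integrable g1 := (hf1.slice_integrable x p σ).sub (hf1.slice_integrable x q σ)
  have hi2 : Integrable g2 := (hf2.slice_integrable x p σ).sub (hf2.slice_integrable x q σ)
  have hi3 : Integrable g3 := (hf3.slice_integrable x p σ).sub (hf3.slice_integrable x q σ)
  have hs0 : ∀ s, R < |s| → g0 s = 0 := fun s hs => by
    show slice f x p σ s - slice f x q σ s = 0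
    rw [hf.slice_supp x p σ s hs, hf.slice_supp x q σ s hs, sub_zero]
  have hs3 : ∀ s, R < |s| → g3 s = 0 := fun s hs => by
    show slice (Ds (Ds (Ds f))) x p σ s - slice (Ds (Ds (Ds f))) x q σ s = 0
    rw [hf3.slice_supp x p σ s hs, hf3.slice_supp x q σ s hs, sub_zero]
  have hb0 : ∀ s, ‖g0 s‖ ≤ L0 * ‖p - q‖ * wt m' σ := fun s => by
    have := hL0 (s, x, x, p) (s, x, x, q) σ
    rwa [norm_wsub] at this
  have hb3 : ∀ s, ‖g3 s‖ ≤ L3 * ‖p - q‖ * wt m' σ := fun s => by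
    have := hL3 (s, x, x, p) (s, x, x, q) σ
    rwa [norm_wsub] at this
  have e1 : 𝓕 g1 = fun (ξ : ℝ) => (2 * ↑π * Complex.I * ↑ξ) • 𝓕 g0 ξ := fourier_deriv_eq hd0 hi0 hi1
  have e2 : 𝓕 g2 = fun (ξ : ℝ) => (2 * ↑π * Complex.I * ↑ξ) • 𝓕 g1 ξ := fourier_deriv_eq hd1 hi1 hi2
  have e3 : 𝓕 g3 = fun (ξ : ℝ) => (2 * ↑π * Complex.I * ↑ξ) • 𝓕 g2 ξ := fourier_deriv_eq hd2 hi2 hi3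
  have hM0 : ‖𝓕 g0 ξ‖ ≤ 2 * R * (L0 * ‖p - q‖ * wt m' σ) := fourier_norm_le hR hs0 hb0 hi0 ξ
  have hM3 : ‖𝓕 g3 ξ‖ ≤ 2 * R * (L3 * ‖p - q‖ * wt m' σ) := fourier_norm_le hR hs3 hb3 hi3 ξ
  have hrel : 𝓕 g3 ξ = (2 * ↑π * Complex.I * ↑ξ : ℂ) • ((2 * ↑π * Complex.I * ↑ξ : ℂ) •
      ((2 * ↑π * Complex.I * ↑ξ : ℂ) • 𝓕 g0 ξ)) := by rw [e3, e2, e1]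
  have hkey := decay_combine hM0 hM3 hrel
  have hsplit : 𝓕 g0 ξ = 𝓕 (slice f x p σ) ξ - 𝓕 (slice f x q σ) ξ :=
    fourier_sub (hf.slice_integrable x p σ) (hf.slice_integrable x q σ) ξ
  rw [← hsplit]
  calc ‖𝓕 g0 ξ‖ ≤ (8 * (2 * R * (L0 * ‖p - q‖ * wt m' σ))
        + 8 * (2 * R * (L3 * ‖p - q‖ * wt m' σ))) * dk ξ := hkey
    _ = (8 * (2 * R * L0) + 8 * (2 * R * L3)) * ‖p - q‖ * wt m' σ * dk ξ := by ring

lemma contFT {g : ℝ → ℂ} (hg : Integrable g) : Continuous (𝓕 g) :=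
  VectorFourier.fourierIntegral_continuous Real.continuous_fourierChar
    (by exact continuous_inner) hg

lemma Nice.fourier_integral_inv (hf : Nice n m' R f) (hR : 0 ≤ R)
    (x p : Fin (n+1) → ℝ) (σ : ℝ) :
    ∫ ξ, 𝓕 (slice f x p σ) ξ = f (0, x, x, p) σ := by
  obtain ⟨C, hC0, hC⟩ := hf.fourier_decay hR
  have hgi : Integrable (slice f x p σ) := hf.slice_integrable x p σ
  have hFi : Integrable (𝓕 (slice f x p σ)) := by
    refine Integrable.mono' (dk_integrable.const_mul (C * wt m' σ))
      (contFT hgi).aestronglyMeasurable ?_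
    exact Filter.Eventually.of_forall fun ξ => by
      simpa [mul_assoc] using hC x p σ ξ
  have h0 : ContinuousAt (slice f x p σ) 0 := (hf.slice_cont x p σ).continuousAt
  calc ∫ ξ, 𝓕 (slice f x p σ) ξ = 𝓕⁻ (𝓕 (slice f x p σ)) 0 := by
        rw [Real.fourierInv_eq]; simp
    _ = slice f x p σ 0 := hgi.fourierInv_fourier_eq hFi h0
    _ = f (0, x, x, p) σ := rfl

/-! ### continuity of parametric integrals -/

lemma cont_param_integral {α : Type*} [TopologicalSpace α] [FirstCountableTopology α]
    {β : Type*} [MeasurableSpace β] [TopologicalSpace β] [OpensMeasurableSpace β]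
    {μ : Measure β} {g : α × β → ℂ} (hg : Continuous g)
    {b : β → ℝ} (hb : Integrable b μ) (hbd : ∀ y s, ‖g (y, s)‖ ≤ b s) :
    Continuous fun y => ∫ s, g (y, s) ∂μ := by
  rw [continuous_iff_continuousAt]
  intro y₀
  apply continuousAt_of_dominated
  · exact Filter.Eventually.of_forall fun y =>
      (hg.comp (continuous_const.prodMk continuous_id)).aestronglyMeasurable
  · exact Filter.Eventually.of_forall fun y => Filter.Eventually.of_forall (hbd y)
  · exact hb
  · exact Filter.Eventually.of_forall fun s =>
      (hg.comp (continuous_id.prodMk continuous_const)).continuousAt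

lemma continuous_consFun : Continuous fun z : ℝ × (Fin n → ℝ) =>
    (Fin.cons z.1 z.2 : Fin (n+1) → ℝ) := by
  apply continuous_pi
  intro i
  refine Fin.cases ?_ ?_ i
  · simpa using (continuous_fst : Continuous fun z : ℝ × (Fin n → ℝ) => z.1)
  · intro j; simp only [Fin.cons_succ]; exact (continuous_apply j).comp
      (continuous_snd : Continuous fun z : ℝ × (Fin n → ℝ) => z.2)

lemma cons_sub_norm (c d : ℝ) (p' : Fin n → ℝ) :
    ‖(Fin.cons c p' : Fin (n+1) → ℝ) - Fin.cons d p'‖ ≤ |c - d| := by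
  refine (pi_norm_le_iff_of_nonneg (abs_nonneg _)).2 fun i => ?_
  refine Fin.cases ?_ ?_ i
  · simp
  · intro j; simp

lemma piFinSucc_symm_apply (t : ℝ) (p' : Fin n → ℝ) :
    (MeasurableEquiv.piFinSuccAbove (fun _ : Fin (n+1) => ℝ) 0).symm (t, p')
      = Fin.cons t p' := by
  rw [MeasurableEquiv.piFinSuccAbove_symm_apply]
  funext i
  refine Fin.cases ?_ ?_ i
  · simp
  · intro j
    simp [Fin.insertNth_zero]

/-! ### From amplitudes to Nice families -/

lemma nice_of_amp {n : ℕ} {m' : ℝ} {a : WW n → ℝ → ℂ} (ha : IsAmplitude n m' a) :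
    ∃ R : ℝ, 0 < R ∧ Nice n m' R a := by
  obtain ⟨hsm, ⟨K, hK, hKsupp⟩, hbd⟩ := ha
  obtain ⟨R, hR⟩ := (Metric.isBounded_iff_subset_closedBall 0).1 hK.isBounded
  refine ⟨max R 1, lt_of_lt_of_le one_pos (le_max_right _ _), ?_, ?_, ?_⟩
  · exact hsm
  · intro w σ hw
    apply hKsupp w σ
    intro hmem
    have h1 : ‖w‖ ≤ R := by simpa [Metric.mem_closedBall, dist_zero_right] using hR hmem
    have h2 : R ≤ max R 1 := le_max_left _ _
    linarith
  · intro k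
    obtain ⟨C, hC⟩ := hbd k 0
    refine ⟨max C 0, le_max_right _ _, fun w σ => ?_⟩
    have h1 := hC w σ
    have h2 : (fun w' => iteratedDeriv 0 (a w') σ) = fun w' => a w' σ := by
      funext w'; rw [iteratedDeriv_zero]
    rw [h2] at h1
    have h3 : m' - ((0:ℕ):ℝ) = m' := by norm_num
    rw [h3] at h1
    calc ‖iteratedFDeriv ℝ k (fun w' => a w' σ) w‖ ≤ C * wt m' σ := h1
      _ ≤ max C 0 * wt m' σ :=
        mul_le_mul_of_nonneg_right (le_max_left _ _) (wt_nonneg _ _)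

/-! ### The oscillatory integrand and `Phi` -/

variable {a : WW n → ℝ → ℂ} {ℏ : ℝ}

/-- The partial Fourier transform appearing after doing the `s` integral. -/
def Phi (a : WW n → ℝ → ℂ) (ℏ : ℝ) (x p : Fin (n+1) → ℝ) (σ : ℝ) : ℂ :=
  𝓕 (slice a x p σ) ((ℏ⁻¹ * p 0 - σ) / (2 * π))

lemma Phi_integral (a : WW n → ℝ → ℂ) (ℏ : ℝ) (x p : Fin (n+1) → ℝ) (σ : ℝ) :
    Phi a ℏ x p σ
      = ∫ s : ℝ, (𝐞 (-(s * ((ℏ⁻¹ * p 0 - σ) / (2 * π)))) : Circle) • a (s, x, x, p) σ := by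
  rw [Phi, Real.fourier_real_eq]
  rfl

lemma osc_eq (hm : m' ≤ -4) (a : WW n → ℝ → ℂ) (ℏ : ℝ) (x : Fin (n+1) → ℝ)
    (q : ℝ × (Fin (n+1) → ℝ) × ℝ) :
    oscIntegrand n a ℏ x x ⌈m' / 2 + 1⌉₊ q
      = (𝐞 (-(q.1 * ((ℏ⁻¹ * q.2.1 0 - q.2.2) / (2 * π)))) : Circle) •
          a (q.1, x, x, q.2.1) q.2.2 := by
  obtain ⟨s, p, σ⟩ := q
  have hK : ⌈m' / 2 + 1⌉₊ = 0 := Nat.ceil_eq_zero.mpr (by nlinarith)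
  rw [hK]
  show Complex.exp (Complex.I * Complex.ofReal (ℏ⁻¹ * (∑ i, (x i - x i) * p i) + s * σ)) *
      (Complex.ofReal (1 + σ ^ 2))⁻¹ ^ 0 *
      (oneAddDsq^[0] (fun s' => Complex.exp (-Complex.I * Complex.ofReal (ℏ⁻¹ * s' * p 0)) *
        a (s', x, x, p) σ)) s = _
  rw [Function.iterate_zero, id_eq, pow_zero, mul_one]
  have hsum : (∑ i, (x i - x i) * p i) = 0 := by simp
  rw [hsum, mul_zero, zero_add]
  rw [Circle.smul_def, Real.fourierChar_apply]
  rw [mul_assoc, ← mul_assoc (Complex.exp _), ← Complex.exp_add, ← mul_assoc]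
  congr 2
  have hpi : (π : ℝ) ≠ 0 := Real.pi_ne_zero
  have harg : 2 * π * -(s * ((ℏ⁻¹ * p 0 - σ) / (2 * π))) = s * σ - ℏ⁻¹ * s * p 0 := by
    field_simp
    ring
  rw [harg]
  push_cast
  ring

lemma fourier_zero_fun (ξ : ℝ) : 𝓕 (fun _ : ℝ => (0:ℂ)) ξ = 0 := by
  rw [Real.fourier_eq]
  simp

lemma slice_zero_of_far (hN : Nice n m' R a) {x p : Fin (n+1) → ℝ} {σ : ℝ}
    (h : R < ‖x‖ ∨ R < ‖p‖) : slice a x p σ = fun _ => 0 := by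
  funext s
  rcases h with h | h
  · exact hN.supp _ σ (lt_of_lt_of_le h (norm_x_le s x x p))
  · exact hN.supp _ σ (lt_of_lt_of_le h (norm_p_le s x x p))

lemma Phi_zero_of_far (hN : Nice n m' R a) {x p : Fin (n+1) → ℝ} {σ : ℝ}
    (h : R < ‖x‖ ∨ R < ‖p‖) (ℏ : ℝ) : Phi a ℏ x p σ = 0 := by
  rw [Phi, slice_zero_of_far hN h, fourier_zero_fun]

lemma indicator_Icc_integrable {c R : ℝ} :
    Integrable (Set.indicator (Set.Icc (-R) R) (fun _ : ℝ => c)) := by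
  rw [integrable_indicator_iff measurableSet_Icc]
  exact integrableOn_const measure_Icc_lt_top.ne

lemma indicator_ball_integrable {β : Type*} [NormedAddCommGroup β] [MeasureSpace β]
    [ProperSpace β] [BorelSpace β] [IsFiniteMeasureOnCompacts (volume : Measure β)]
    {c R : ℝ} :
    Integrable (Set.indicator (Metric.closedBall (0:β) R) (fun _ : β => c)) := by
  rw [integrable_indicator_iff measurableSet_closedBall]
  exact integrableOn_const measure_closedBall_lt_top.ne

lemma not_Icc_lt_abs {s R : ℝ} (hs : s ∉ Set.Icc (-R) R) : R < |s| := by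
  rw [Set.mem_Icc, not_and_or] at hs
  rw [lt_abs]
  rcases hs with h | h
  · push_neg at h; right; linarith
  · push_neg at h; left; exact h

/-- joint continuity of `Phi`. -/
lemma Phi_cont (hN : Nice n m' R a) (hm : m' ≤ -4) (ℏ : ℝ) :
    Continuous fun z : ((Fin (n+1) → ℝ) × (Fin (n+1) → ℝ) × ℝ) => Phi a ℏ z.1 z.2.1 z.2.2 := by
  obtain ⟨C0, hC00, hC0⟩ := hN.norm_le
  set g : (((Fin (n+1) → ℝ) × (Fin (n+1) → ℝ) × ℝ)) × ℝ → ℂ :=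
    fun w => (𝐞 (-(w.2 * ((ℏ⁻¹ * w.1.2.1 0 - w.1.2.2) / (2 * π)))) : Circle) •
      a (w.2, w.1.1, w.1.1, w.1.2.1) w.1.2.2 with hg
  have heq : (fun z : ((Fin (n+1) → ℝ) × (Fin (n+1) → ℝ) × ℝ) => Phi a ℏ z.1 z.2.1 z.2.2)
      = fun z => ∫ s : ℝ, g (z, s) := by
    funext z; exact Phi_integral a ℏ z.1 z.2.1 z.2.2
  rw [heq]
  have hχ : Continuous fun w : (((Fin (n+1) → ℝ) × (Fin (n+1) → ℝ) × ℝ)) × ℝ =>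
      (𝐞 (-(w.2 * ((ℏ⁻¹ * w.1.2.1 0 - w.1.2.2) / (2 * π)))) : Circle) :=
    Real.continuous_fourierChar.comp (by fun_prop)
  have hmap : Continuous fun w : (((Fin (n+1) → ℝ) × (Fin (n+1) → ℝ) × ℝ)) × ℝ =>
      ((((w.2, w.1.1, w.1.1, w.1.2.1)) : WW n), w.1.2.2) := by fun_prop
  have hac : Continuous fun w : (((Fin (n+1) → ℝ) × (Fin (n+1) → ℝ) × ℝ)) × ℝ =>
      a (w.2, w.1.1, w.1.1, w.1.2.1) w.1.2.2 := hN.cont.comp hmap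
  refine cont_param_integral (hχ.smul hac) (indicator_Icc_integrable (c := C0) (R := R)) ?_
  rintro ⟨x, p, σ⟩ s
  have hnorm : ‖g ((x, p, σ), s)‖ = ‖a (s, x, x, p) σ‖ := by
    rw [hg]; simp [norm_smul]
  rw [hnorm]
  by_cases hs : s ∈ Set.Icc (-R) R
  · rw [Set.indicator_of_mem hs]
    calc ‖a (s, x, x, p) σ‖ ≤ C0 * wt m' σ := hC0 _ _
      _ ≤ C0 * 1 := mul_le_mul_of_nonneg_left (wt_le_one (by linarith) σ) hC00
      _ = C0 := mul_one C0
  · rw [Set.indicator_of_notMem hs]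
    rw [hN.supp _ σ (lt_of_lt_of_le (not_Icc_lt_abs hs) (norm_s_le s x x p)), norm_zero]

/-! ### The core estimate on the `t` integral -/

lemma dk_cont : Continuous dk :=
  ((continuous_const.add _root_.continuous_abs).pow 3).inv₀ (fun ξ => (by positivity : (1 + |ξ|) ^ 3 ≠ 0))

lemma dk2_cont : Continuous dk2 :=
  ((continuous_const.add _root_.continuous_abs).pow 2).inv₀ (fun ξ => (by positivity : (1 + |ξ|) ^ 2 ≠ 0))

lemma absdk_integrable (c : ℝ) : Integrable (fun u => |u| * dk (u - c)) := by
  refine Integrable.mono' ((dk2_integrable.comp_sub_right c).add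
    ((dk_integrable.comp_sub_right c).const_mul |c|)) ?_ ?_
  · exact (_root_.continuous_abs.mul (dk_cont.comp (continuous_id.sub continuous_const))
      ).aestronglyMeasurable
  · refine Filter.Eventually.of_forall fun u => ?_
    have h0 : 0 ≤ |u| * dk (u - c) := mul_nonneg (abs_nonneg u) (dk_nonneg _)
    rw [Real.norm_eq_abs, _root_.abs_of_nonneg h0]
    exact abs_mul_dk_le c u

lemma absdk_integral_le (c : ℝ) :
    ∫ u, |u| * dk (u - c) ≤ (∫ u, dk2 u) + |c| * ∫ u, dk u := by
  have h1 : Integrable (fun u => dk2 (u - c) + |c| * dk (u - c)) :=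
    (dk2_integrable.comp_sub_right c).add ((dk_integrable.comp_sub_right c).const_mul |c|)
  calc ∫ u, |u| * dk (u - c) ≤ ∫ u, (dk2 (u - c) + |c| * dk (u - c)) :=
        integral_mono (absdk_integrable c) h1 (abs_mul_dk_le c)
    _ = (∫ u, dk2 (u - c)) + ∫ u, |c| * dk (u - c) :=
        integral_add (dk2_integrable.comp_sub_right c)
          ((dk_integrable.comp_sub_right c).const_mul |c|)
    _ = (∫ u, dk2 u) + |c| * ∫ u, dk u := by
        rw [integral_sub_right_eq_self dk2 c, integral_const_mul,
          integral_sub_right_eq_self dk c]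

lemma tail_norm_le (t : ℝ) (p' : Fin n → ℝ) :
    ‖p'‖ ≤ ‖(Fin.cons t p' : Fin (n+1) → ℝ)‖ := by
  refine (pi_norm_le_iff_of_nonneg (norm_nonneg _)).2 fun j => ?_
  simpa using norm_le_pi_norm (Fin.cons t p' : Fin (n+1) → ℝ) j.succ

lemma core_vanish (hN : Nice n m' R a) {x : Fin (n+1) → ℝ} {p' : Fin n → ℝ}
    (h : ¬(‖x‖ ≤ R ∧ ‖p'‖ ≤ R)) (ℏ σ : ℝ) :
    (∫ t : ℝ, Phi a ℏ x (Fin.cons t p') σ) = 0 ∧ a (0, x, x, Fin.cons 0 p') σ = 0 := by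
  rw [not_and_or] at h
  have hfar : ∀ t : ℝ, R < ‖x‖ ∨ R < ‖(Fin.cons t p' : Fin (n+1) → ℝ)‖ := by
    intro t
    rcases h with h | h
    · left; exact lt_of_not_ge h
    · right; exact lt_of_lt_of_le (lt_of_not_ge h) (tail_norm_le t p')
  constructor
  · have hz : ∀ t : ℝ, Phi a ℏ x (Fin.cons t p') σ = 0 :=
      fun t => Phi_zero_of_far hN (hfar t) ℏ
    simp only [hz, integral_zero]
  · rcases hfar 0 with h' | h'
    · exact hN.supp _ σ (lt_of_lt_of_le h' (norm_x_le 0 x x _))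
    · exact hN.supp _ σ (lt_of_lt_of_le h' (norm_p_le 0 x x _))

lemma core (hN : Nice n m' R a) (hm : m' ≤ -4) (hR : 0 < R) :
    ∃ C : ℝ, 0 ≤ C ∧ ∀ ℏ : ℝ, 0 < ℏ → ∀ (x : Fin (n+1) → ℝ) (p' : Fin n → ℝ) (σ : ℝ),
      ‖(∫ t : ℝ, Phi a ℏ x (Fin.cons t p') σ)
          - (2 * π * ℏ) • a (0, x, x, Fin.cons 0 p') σ‖
        ≤ C * ℏ ^ (2:ℕ) * wt (m' + 1) σ := by
  obtain ⟨Cd, hCd0, hCd⟩ := hN.fourier_decay hR.le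
  obtain ⟨Cs, hCs0, hCs⟩ := hN.fourier_decay_sub hR.le
  have hK10 : 0 ≤ ∫ u, dk2 u := integral_nonneg fun u => by unfold dk2; positivity
  have hK20 : 0 ≤ ∫ u, dk u := integral_nonneg fun u => dk_nonneg u
  set K₁ := ∫ u, dk2 u with hK₁
  set K₂ := ∫ u, dk u with hK₂
  refine ⟨(2*π)^(2:ℕ) * Cs * (K₁ + K₂), by positivity, fun ℏ hℏ x p' σ => ?_⟩
  have hπ : (0:ℝ) < 2 * π := by positivity
  have hc : (0:ℝ) < 2 * π * ℏ := by positivity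
  set ξc : ℝ := σ / (2 * π) with hξc
  -- the two integrands
  set G : ℝ → ℂ := fun u => 𝓕 (slice a x (Fin.cons (2*π*ℏ*u) p') σ) (u - ξc) with hG
  set M : ℝ → ℂ := fun u => 𝓕 (slice a x (Fin.cons 0 p') σ) (u - ξc) with hM
  have hPhi_eq : ∀ t : ℝ, Phi a ℏ x (Fin.cons t p') σ
      = 𝓕 (slice a x (Fin.cons t p') σ) ((ℏ⁻¹ * t - σ) / (2*π)) := by
    intro t
    show 𝓕 (slice a x (Fin.cons t p') σ) ((ℏ⁻¹ * (Fin.cons t p' : Fin (n+1) → ℝ) 0 - σ) / (2*π))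
      = _
    rw [Fin.cons_zero]
  have harg : ∀ u : ℝ, (ℏ⁻¹ * (2*π*ℏ*u) - σ) / (2*π) = u - ξc := by
    intro u
    rw [hξc]
    field_simp
  have hGeq : ∀ u : ℝ, Phi a ℏ x (Fin.cons (2*π*ℏ*u) p') σ = G u := by
    intro u
    rw [hPhi_eq, harg]
  -- scaling
  have hscale : (∫ t : ℝ, Phi a ℏ x (Fin.cons t p') σ) = (2*π*ℏ) • ∫ u, G u := by
    have h := MeasureTheory.Measure.integral_comp_mul_left
      (fun t => Phi a ℏ x (Fin.cons t p') σ) (2*π*ℏ)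
    have h2 : (∫ u, Phi a ℏ x (Fin.cons (2*π*ℏ*u) p') σ) = ∫ u, G u := by
      congr 1; funext u; exact hGeq u
    rw [h2] at h
    rw [h, _root_.abs_of_pos (by positivity : (0:ℝ) < (2*π*ℏ)⁻¹), smul_smul,
      mul_inv_cancel₀ hc.ne', one_smul]
  -- integrability of G and M
  have hMint : Integrable M := by
    refine Integrable.mono' ((dk_integrable.comp_sub_right ξc).const_mul (Cd * wt m' σ))
      ?_ ?_
    · exact ((contFT (hN.slice_integrable x (Fin.cons 0 p') σ)).comp
        (continuous_id.sub continuous_const)).aestronglyMeasurable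
    · refine Filter.Eventually.of_forall fun u => ?_
      have := hCd x (Fin.cons 0 p') σ (u - ξc)
      calc ‖M u‖ ≤ Cd * wt m' σ * dk (u - ξc) := this
        _ = Cd * wt m' σ * dk (u - ξc) := rfl
  have hGcont : Continuous G := by
    have h1 : Continuous fun u : ℝ =>
        ((x, Fin.cons (2*π*ℏ*u) p', σ) : (Fin (n+1) → ℝ) × (Fin (n+1) → ℝ) × ℝ) := by
      refine continuous_const.prodMk (Continuous.prodMk ?_ continuous_const)
      have hin : Continuous fun u : ℝ => ((2*π*ℏ*u, p') : ℝ × (Fin n → ℝ)) := by fun_prop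
      exact continuous_consFun.comp hin
    have h2 := (Phi_cont hN hm ℏ).comp h1
    rw [Function.comp_def] at h2
    have h3 : (fun u : ℝ => Phi a ℏ x (Fin.cons (2*π*ℏ*u) p') σ) = G := funext hGeq
    rwa [h3] at h2
  have hGint : Integrable G := by
    refine Integrable.mono' ((dk_integrable.comp_sub_right ξc).const_mul (Cd * wt m' σ))
      hGcont.aestronglyMeasurable ?_
    exact Filter.Eventually.of_forall fun u => hCd x (Fin.cons (2*π*ℏ*u) p') σ (u - ξc)
  -- main term
  have hmain : (∫ u, M u) = a (0, x, x, Fin.cons 0 p') σ := by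
    rw [hM]
    rw [integral_sub_right_eq_self (fun ξ => 𝓕 (slice a x (Fin.cons 0 p') σ) ξ) ξc]
    exact hN.fourier_integral_inv hR.le x (Fin.cons 0 p') σ
  -- difference bound
  have hdiff : ∀ u : ℝ, ‖G u - M u‖
      ≤ (Cs * (2*π*ℏ) * wt m' σ) * (|u| * dk (u - ξc)) := by
    intro u
    have h1 := hCs x (Fin.cons (2*π*ℏ*u) p') (Fin.cons 0 p') σ (u - ξc)
    have h2 : ‖(Fin.cons (2*π*ℏ*u) p' : Fin (n+1) → ℝ) - Fin.cons 0 p'‖ ≤ 2*π*ℏ*|u| := by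
      refine le_trans (cons_sub_norm _ _ _) ?_
      rw [sub_zero, abs_mul, _root_.abs_of_pos hc]
    calc ‖G u - M u‖ ≤ Cs * ‖(Fin.cons (2*π*ℏ*u) p' : Fin (n+1) → ℝ) - Fin.cons 0 p'‖
          * wt m' σ * dk (u - ξc) := h1
      _ ≤ Cs * (2*π*ℏ*|u|) * wt m' σ * dk (u - ξc) := by
          have hd := dk_nonneg (u - ξc)
          have hw := wt_nonneg m' σ
          nlinarith [mul_nonneg (mul_nonneg hCs0 hw) hd]
      _ = (Cs * (2*π*ℏ) * wt m' σ) * (|u| * dk (u - ξc)) := by ring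
  have hdiffint : Integrable (fun u => G u - M u) := hGint.sub hMint
  have hbnd : ‖∫ u, (G u - M u)‖ ≤ (Cs * (2*π*ℏ) * wt m' σ) * (K₁ + |ξc| * K₂) := by
    calc ‖∫ u, (G u - M u)‖ ≤ ∫ u, ‖G u - M u‖ := norm_integral_le_integral_norm _
      _ ≤ ∫ u, (Cs * (2*π*ℏ) * wt m' σ) * (|u| * dk (u - ξc)) :=
          integral_mono hdiffint.norm ((absdk_integrable ξc).const_mul _)
            (fun u => hdiff u)
      _ = (Cs * (2*π*ℏ) * wt m' σ) * ∫ u, |u| * dk (u - ξc) := integral_const_mul _ _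
      _ ≤ (Cs * (2*π*ℏ) * wt m' σ) * (K₁ + |ξc| * K₂) := by
          exact mul_le_mul_of_nonneg_left (absdk_integral_le ξc)
            (mul_nonneg (mul_nonneg hCs0 hc.le) (wt_nonneg _ _))
  -- put it together
  have hsplit : (∫ u, G u) = a (0, x, x, Fin.cons 0 p') σ + ∫ u, (G u - M u) := by
    rw [integral_sub hGint hMint, hmain]
    ring
  rw [hscale, hsplit, smul_add, add_sub_cancel_left]
  rw [norm_smul, Real.norm_eq_abs, _root_.abs_of_pos hc]
  have hξcle : |ξc| ≤ |σ| := by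
    rw [hξc, abs_div, _root_.abs_of_pos hπ]
    exact div_le_self (abs_nonneg σ) (by nlinarith [Real.pi_gt_three])
  have hfin : (Cs * (2*π*ℏ) * wt m' σ) * (K₁ + |ξc| * K₂)
      ≤ Cs * (2*π*ℏ) * (K₁ + K₂) * wt (m'+1) σ := by
    rw [← wt_mul_one_add]
    have h1 : K₁ + |ξc| * K₂ ≤ (K₁ + K₂) * (1 + |σ|) := by
      have h2 : |ξc| ≤ |σ| := hξcle
      nlinarith [abs_nonneg σ, abs_nonneg ξc]
    have h3 : 0 ≤ Cs * (2*π*ℏ) * wt m' σ :=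
      mul_nonneg (mul_nonneg hCs0 hc.le) (wt_nonneg _ _)
    nlinarith [mul_nonneg (mul_nonneg hCs0 hc.le) (wt_nonneg m' σ)]
  calc (2*π*ℏ) * ‖∫ u, (G u - M u)‖
      ≤ (2*π*ℏ) * ((Cs * (2*π*ℏ) * wt m' σ) * (K₁ + |ξc| * K₂)) :=
        mul_le_mul_of_nonneg_left hbnd hc.le
    _ ≤ (2*π*ℏ) * (Cs * (2*π*ℏ) * (K₁ + K₂) * wt (m'+1) σ) :=
        mul_le_mul_of_nonneg_left hfin hc.le
    _ = (2*π)^(2:ℕ) * Cs * (K₁ + K₂) * ℏ^(2:ℕ) * wt (m'+1) σ := by ring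

/-! ### Integrability and the Fubini chain -/

lemma norm_integral_le_of_le {β : Type*} [MeasurableSpace β] {μ : Measure β}
    {g : β → ℂ} {b : β → ℝ} (hgi : Integrable g μ) (hbi : Integrable b μ)
    (hb : ∀ y, ‖g y‖ ≤ b y) : ‖∫ y, g y ∂μ‖ ≤ ∫ y, b y ∂μ :=
  le_trans (norm_integral_le_integral_norm g) (integral_mono hgi.norm hbi hb)

lemma integral_ind_Icc {R : ℝ} (hR : 0 ≤ R) (M : ℝ) :
    ∫ s : ℝ, Set.indicator (Set.Icc (-R) R) (fun _ => M) s = 2 * R * M := by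
  rw [integral_indicator measurableSet_Icc, setIntegral_const, Real.volume_real_Icc,
    max_eq_left (by linarith), smul_eq_mul]
  ring

lemma integral_ind_ball {β : Type*} [NormedAddCommGroup β] [MeasureSpace β]
    [ProperSpace β] [BorelSpace β] [IsFiniteMeasureOnCompacts (volume : Measure β)]
    {R : ℝ} (M : ℝ) :
    ∫ y : β, Set.indicator (Metric.closedBall 0 R) (fun _ => M) y
      = (volume (Metric.closedBall (0:β) R)).toReal * M := by
  rw [integral_indicator measurableSet_closedBall, setIntegral_const, smul_eq_mul]; rfl

variable {C0 : ℝ}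

/-- short names for the two indicator functions -/
def iI (R : ℝ) : ℝ → ℝ := Set.indicator (Set.Icc (-R) R) (fun _ => (1:ℝ))

def iB {β : Type*} [NormedAddCommGroup β] (R : ℝ) : β → ℝ :=
  Set.indicator (Metric.closedBall 0 R) (fun _ => (1:ℝ))

lemma iI_nonneg {R s : ℝ} : 0 ≤ iI R s := Set.indicator_nonneg (fun _ _ => zero_le_one) s

lemma iB_nonneg {β : Type*} [NormedAddCommGroup β] {R : ℝ} {y : β} : 0 ≤ iB R y :=
  Set.indicator_nonneg (fun _ _ => zero_le_one) y

lemma iI_integrable {R : ℝ} : Integrable (iI R) := indicator_Icc_integrable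

lemma iB_integrable {β : Type*} [NormedAddCommGroup β] [MeasureSpace β]
    [ProperSpace β] [BorelSpace β] [IsFiniteMeasureOnCompacts (volume : Measure β)]
    {R : ℝ} : Integrable (iB R : β → ℝ) := indicator_ball_integrable

lemma iI_le_one {R s : ℝ} : iI R s ≤ 1 := by
  unfold iI
  by_cases h : s ∈ Set.Icc (-R) R
  · rw [Set.indicator_of_mem h]
  · rw [Set.indicator_of_notMem h]; norm_num

lemma iB_le_one {β : Type*} [NormedAddCommGroup β] {R : ℝ} {y : β} : iB R y ≤ 1 := by
  unfold iB
  by_cases h : y ∈ Metric.closedBall (0:β) R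
  · rw [Set.indicator_of_mem h]
  · rw [Set.indicator_of_notMem h]; norm_num

lemma norm_a_le_ind (hN : Nice n m' R a) (hC00 : 0 ≤ C0)
    (ha0 : ∀ w σ, ‖a w σ‖ ≤ C0 * wt m' σ) (s : ℝ) (x p : Fin (n+1) → ℝ) (σ : ℝ) :
    ‖a (s, x, x, p) σ‖ ≤ iI R s * (iB R p * (C0 * wt m' σ)) := by
  have hwt := wt_nonneg m' σ
  by_cases hs : s ∈ Set.Icc (-R) R
  · by_cases hp : p ∈ Metric.closedBall (0 : Fin (n+1) → ℝ) R
    · rw [iI, iB, Set.indicator_of_mem hs, Set.indicator_of_mem hp, one_mul, one_mul]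
      exact ha0 _ σ
    · have hfar : R < ‖p‖ := by
        rw [Metric.mem_closedBall, dist_zero_right] at hp
        exact lt_of_not_ge hp
      rw [hN.supp _ σ (lt_of_lt_of_le hfar (norm_p_le s x x p)), norm_zero]
      exact mul_nonneg iI_nonneg (mul_nonneg iB_nonneg (mul_nonneg hC00 hwt))
  · rw [hN.supp _ σ (lt_of_lt_of_le (not_Icc_lt_abs hs) (norm_s_le s x x p)), norm_zero]
    exact mul_nonneg iI_nonneg (mul_nonneg iB_nonneg (mul_nonneg hC00 hwt))

lemma bnd3_integrable (hm : m' ≤ -4) :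
    Integrable (fun q : ℝ × (Fin (n+1) → ℝ) × ℝ =>
      iI R q.1 * (iB R q.2.1 * (C0 * wt m' q.2.2))) := by
  have hinner : Integrable (fun z : (Fin (n+1) → ℝ) × ℝ => iB R z.1 * (C0 * wt m' z.2)) := by
    rw [Measure.volume_eq_prod]
    exact Integrable.mul_prod iB_integrable
      ((wt_integrable (show m' ≤ -2 by linarith)).const_mul C0)
  rw [Measure.volume_eq_prod]
  exact Integrable.mul_prod iI_integrable hinner

/-- the `𝐞`-form of the oscillatory integrand, for fixed `x`. -/
def eForm (a : WW n → ℝ → ℂ) (ℏ : ℝ) (x : Fin (n+1) → ℝ) :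
    ℝ × (Fin (n+1) → ℝ) × ℝ → ℂ :=
  fun q => (𝐞 (-(q.1 * ((ℏ⁻¹ * q.2.1 0 - q.2.2) / (2 * π)))) : Circle) •
    a (q.1, x, x, q.2.1) q.2.2

lemma eForm_cont (hN : Nice n m' R a) (ℏ : ℝ) (x : Fin (n+1) → ℝ) :
    Continuous (eForm a ℏ x) := by
  have hχ : Continuous fun q : ℝ × (Fin (n+1) → ℝ) × ℝ =>
      (𝐞 (-(q.1 * ((ℏ⁻¹ * q.2.1 0 - q.2.2) / (2 * π)))) : Circle) :=
    Real.continuous_fourierChar.comp (by fun_prop)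
  have hmap : Continuous fun q : ℝ × (Fin (n+1) → ℝ) × ℝ =>
      ((((q.1, x, x, q.2.1)) : WW n), q.2.2) := by fun_prop
  exact hχ.smul (hN.cont.comp hmap)

lemma eForm_integrable (hN : Nice n m' R a) (hm : m' ≤ -4) (hC00 : 0 ≤ C0)
    (ha0 : ∀ w σ, ‖a w σ‖ ≤ C0 * wt m' σ) (ℏ : ℝ) (x : Fin (n+1) → ℝ) :
    Integrable (eForm a ℏ x) := by
  refine Integrable.mono' (bnd3_integrable (C0 := C0) (R := R) hm)
    (eForm_cont hN ℏ x).aestronglyMeasurable ?_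
  refine Filter.Eventually.of_forall fun q => ?_
  have h1 : ‖eForm a ℏ x q‖ = ‖a (q.1, x, x, q.2.1) q.2.2‖ := by
    rw [eForm]; simp [norm_smul]
  rw [h1]
  exact norm_a_le_ind hN hC00 ha0 q.1 x q.2.1 q.2.2

lemma Phi_norm_le (hN : Nice n m' R a) (hR : 0 ≤ R)
    (ha0 : ∀ w σ, ‖a w σ‖ ≤ C0 * wt m' σ) (ℏ : ℝ) (x p : Fin (n+1) → ℝ) (σ : ℝ) :
    ‖Phi a ℏ x p σ‖ ≤ 2 * R * (C0 * wt m' σ) :=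
  fourier_norm_le hR (hN.slice_supp x p σ) (fun _ => ha0 _ σ)
    (hN.slice_integrable x p σ) _

lemma Phi_ind_bound (hN : Nice n m' R a) (hR : 0 ≤ R) (hC00 : 0 ≤ C0)
    (ha0 : ∀ w σ, ‖a w σ‖ ≤ C0 * wt m' σ) (ℏ : ℝ) (x p : Fin (n+1) → ℝ) (σ : ℝ) :
    ‖Phi a ℏ x p σ‖ ≤ iB R p * (2 * R * (C0 * wt m' σ)) := by
  by_cases hp : p ∈ Metric.closedBall (0 : Fin (n+1) → ℝ) R
  · rw [iB, Set.indicator_of_mem hp, one_mul]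
    exact Phi_norm_le hN hR ha0 ℏ x p σ
  · have hfar : R < ‖p‖ := by
      rw [Metric.mem_closedBall, dist_zero_right] at hp
      exact lt_of_not_ge hp
    rw [Phi_zero_of_far hN (Or.inr hfar) ℏ, norm_zero]
    have := wt_nonneg m' σ
    exact mul_nonneg iB_nonneg (by positivity)

lemma Phi_pair_integrable (hN : Nice n m' R a) (hm : m' ≤ -4) (hR : 0 ≤ R) (hC00 : 0 ≤ C0)
    (ha0 : ∀ w σ, ‖a w σ‖ ≤ C0 * wt m' σ) (ℏ : ℝ) (x : Fin (n+1) → ℝ) :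
    Integrable (fun y : (Fin (n+1) → ℝ) × ℝ => Phi a ℏ x y.1 y.2) := by
  have hw : Integrable (fun σ : ℝ => 2 * R * (C0 * wt m' σ)) := by
    have h := (wt_integrable (show m' ≤ -2 by linarith)).const_mul (2 * R * C0)
    exact h.congr (Filter.Eventually.of_forall fun σ => by ring)
  have hbint : Integrable (fun y : (Fin (n+1) → ℝ) × ℝ =>
      iB R y.1 * (2 * R * (C0 * wt m' y.2))) := by
    rw [Measure.volume_eq_prod]
    exact Integrable.mul_prod iB_integrable hw
  refine Integrable.mono' hbint ?_ ?_
  · have hmap : Continuous fun y : (Fin (n+1) → ℝ) × ℝ =>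
        ((x, y.1, y.2) : (Fin (n+1) → ℝ) × (Fin (n+1) → ℝ) × ℝ) := by fun_prop
    exact ((Phi_cont hN hm ℏ).comp hmap).aestronglyMeasurable
  · exact Filter.Eventually.of_forall fun y => Phi_ind_bound hN hR hC00 ha0 ℏ x y.1 y.2

lemma Phi_p_integrable (hN : Nice n m' R a) (hm : m' ≤ -4) (hR : 0 ≤ R) (hC00 : 0 ≤ C0)
    (ha0 : ∀ w σ, ‖a w σ‖ ≤ C0 * wt m' σ) (ℏ : ℝ) (x : Fin (n+1) → ℝ) (σ : ℝ) :
    Integrable (fun p : Fin (n+1) → ℝ => Phi a ℏ x p σ) := by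
  refine Integrable.mono'
    ((iB_integrable (β := Fin (n+1) → ℝ) (R := R)).mul_const (2 * R * (C0 * wt m' σ))) ?_ ?_
  · have hmap : Continuous fun p : Fin (n+1) → ℝ =>
        ((x, p, σ) : (Fin (n+1) → ℝ) × (Fin (n+1) → ℝ) × ℝ) := by fun_prop
    exact ((Phi_cont hN hm ℏ).comp hmap).aestronglyMeasurable
  · exact Filter.Eventually.of_forall fun p => Phi_ind_bound hN hR hC00 ha0 ℏ x p σ

lemma iI_mul_eq (R M : ℝ) : (fun t => iI R t * M)
    = Set.indicator (Set.Icc (-R) R) (fun _ => M) := by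
  funext t
  unfold iI
  by_cases h : t ∈ Set.Icc (-R) R
  · rw [Set.indicator_of_mem h, Set.indicator_of_mem h, one_mul]
  · rw [Set.indicator_of_notMem h, Set.indicator_of_notMem h, zero_mul]

lemma iB_mul_eq {β : Type*} [NormedAddCommGroup β] (R M : ℝ) :
    (fun y : β => iB R y * M)
      = Set.indicator (Metric.closedBall 0 R) (fun _ => M) := by
  funext y
  unfold iB
  by_cases h : y ∈ Metric.closedBall (0:β) R
  · rw [Set.indicator_of_mem h, Set.indicator_of_mem h, one_mul]
  · rw [Set.indicator_of_notMem h, Set.indicator_of_notMem h, zero_mul]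

lemma cons_head_norm_le (t : ℝ) (p' : Fin n → ℝ) :
    |t| ≤ ‖(Fin.cons t p' : Fin (n+1) → ℝ)‖ := by
  simpa using norm_le_pi_norm (Fin.cons t p' : Fin (n+1) → ℝ) 0

lemma PhiCons_cont (hN : Nice n m' R a) (hm : m' ≤ -4) (ℏ : ℝ) :
    Continuous fun z : ((Fin (n+1) → ℝ) × (Fin n → ℝ) × ℝ) × ℝ =>
      Phi a ℏ z.1.1 (Fin.cons z.2 z.1.2.1) z.1.2.2 := by
  have hc : Continuous fun z : ((Fin (n+1) → ℝ) × (Fin n → ℝ) × ℝ) × ℝ =>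
      ((z.2, z.1.2.1) : ℝ × (Fin n → ℝ)) := by fun_prop
  have hmap : Continuous fun z : ((Fin (n+1) → ℝ) × (Fin n → ℝ) × ℝ) × ℝ =>
      ((z.1.1, Fin.cons z.2 z.1.2.1, z.1.2.2) :
        (Fin (n+1) → ℝ) × (Fin (n+1) → ℝ) × ℝ) :=
    (continuous_fst.comp continuous_fst).prodMk
      ((continuous_consFun.comp hc).prodMk (by fun_prop))
  have h := (Phi_cont hN hm ℏ).comp hmap
  rw [Function.comp_def] at h
  exact h

lemma PhiCons_ind_bound (hN : Nice n m' R a) (hR : 0 ≤ R) (hC00 : 0 ≤ C0)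
    (ha0 : ∀ w σ, ‖a w σ‖ ≤ C0 * wt m' σ) (ℏ : ℝ) (x : Fin (n+1) → ℝ)
    (p' : Fin n → ℝ) (σ t : ℝ) :
    ‖Phi a ℏ x (Fin.cons t p') σ‖ ≤ iI R t * (2 * R * (C0 * wt m' σ)) := by
  by_cases ht : t ∈ Set.Icc (-R) R
  · rw [iI, Set.indicator_of_mem ht, one_mul]
    exact Phi_norm_le hN hR ha0 ℏ x _ σ
  · have hfar : R < ‖(Fin.cons t p' : Fin (n+1) → ℝ)‖ :=
      lt_of_lt_of_le (not_Icc_lt_abs ht) (cons_head_norm_le t p')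
    rw [Phi_zero_of_far hN (Or.inr hfar) ℏ, norm_zero]
    have := wt_nonneg m' σ
    exact mul_nonneg iI_nonneg (by positivity)

lemma PhiCons_t_integrable (hN : Nice n m' R a) (hm : m' ≤ -4) (hR : 0 ≤ R) (hC00 : 0 ≤ C0)
    (ha0 : ∀ w σ, ‖a w σ‖ ≤ C0 * wt m' σ) (ℏ : ℝ) (x : Fin (n+1) → ℝ)
    (p' : Fin n → ℝ) (σ : ℝ) :
    Integrable (fun t : ℝ => Phi a ℏ x (Fin.cons t p') σ) := by
  refine Integrable.mono' ((iI_integrable (R := R)).mul_const (2 * R * (C0 * wt m' σ))) ?_ ?_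
  · have hmap : Continuous fun t : ℝ =>
        ((((x, p', σ)) : (Fin (n+1) → ℝ) × (Fin n → ℝ) × ℝ), t) :=
      continuous_const.prodMk continuous_id
    exact ((PhiCons_cont hN hm ℏ).comp hmap).aestronglyMeasurable
  · exact Filter.Eventually.of_forall fun t => PhiCons_ind_bound hN hR hC00 ha0 ℏ x p' σ t

lemma Jt_norm_le (hN : Nice n m' R a) (hm : m' ≤ -4) (hR : 0 ≤ R) (hC00 : 0 ≤ C0)
    (ha0 : ∀ w σ, ‖a w σ‖ ≤ C0 * wt m' σ) (ℏ : ℝ) (x : Fin (n+1) → ℝ)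
    (p' : Fin n → ℝ) (σ : ℝ) :
    ‖∫ t : ℝ, Phi a ℏ x (Fin.cons t p') σ‖ ≤ 2 * R * (2 * R * (C0 * wt m' σ)) := by
  have h := norm_integral_le_of_le (PhiCons_t_integrable hN hm hR hC00 ha0 ℏ x p' σ)
    ((iI_integrable (R := R)).mul_const (2 * R * (C0 * wt m' σ)))
    (PhiCons_ind_bound hN hR hC00 ha0 ℏ x p' σ)
  rw [iI_mul_eq, integral_ind_Icc hR] at h
  exact h

lemma Jt_ind_bound (hN : Nice n m' R a) (hm : m' ≤ -4) (hR : 0 ≤ R) (hC00 : 0 ≤ C0)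
    (ha0 : ∀ w σ, ‖a w σ‖ ≤ C0 * wt m' σ) (ℏ : ℝ) (x : Fin (n+1) → ℝ)
    (p' : Fin n → ℝ) (σ : ℝ) :
    ‖∫ t : ℝ, Phi a ℏ x (Fin.cons t p') σ‖
      ≤ iB R p' * (2 * R * (2 * R * (C0 * wt m' σ))) := by
  by_cases hp : p' ∈ Metric.closedBall (0 : Fin n → ℝ) R
  · rw [iB, Set.indicator_of_mem hp, one_mul]
    exact Jt_norm_le hN hm hR hC00 ha0 ℏ x p' σ
  · have hfar : ¬(‖x‖ ≤ R ∧ ‖p'‖ ≤ R) := by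
      rw [Metric.mem_closedBall, dist_zero_right] at hp
      intro h; exact hp h.2
    rw [(core_vanish hN hfar ℏ σ).1, norm_zero]
    have := wt_nonneg m' σ
    exact mul_nonneg iB_nonneg (by positivity)

lemma Jt_cont (hN : Nice n m' R a) (hm : m' ≤ -4) (hR : 0 ≤ R) (hC00 : 0 ≤ C0)
    (ha0 : ∀ w σ, ‖a w σ‖ ≤ C0 * wt m' σ) (ℏ : ℝ) :
    Continuous fun z : (Fin (n+1) → ℝ) × (Fin n → ℝ) × ℝ =>
      ∫ t : ℝ, Phi a ℏ z.1 (Fin.cons t z.2.1) z.2.2 := by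
  refine cont_param_integral (PhiCons_cont hN hm ℏ)
    ((iI_integrable (R := R)).mul_const (2 * R * C0)) ?_
  rintro ⟨x, p', σ⟩ t
  refine le_trans (PhiCons_ind_bound hN hR hC00 ha0 ℏ x p' σ t) ?_
  have h1 : C0 * wt m' σ ≤ C0 * 1 :=
    mul_le_mul_of_nonneg_left (wt_le_one (by linarith) σ) hC00
  have h2 : 2 * R * (C0 * wt m' σ) ≤ 2 * R * C0 := by nlinarith
  exact mul_le_mul_of_nonneg_left h2 iI_nonneg

lemma Jt_p'_integrable (hN : Nice n m' R a) (hm : m' ≤ -4) (hR : 0 ≤ R) (hC00 : 0 ≤ C0)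
    (ha0 : ∀ w σ, ‖a w σ‖ ≤ C0 * wt m' σ) (ℏ : ℝ) (x : Fin (n+1) → ℝ) (σ : ℝ) :
    Integrable (fun p' : Fin n → ℝ => ∫ t : ℝ, Phi a ℏ x (Fin.cons t p') σ) := by
  refine Integrable.mono'
    ((iB_integrable (β := Fin n → ℝ) (R := R)).mul_const
      (2 * R * (2 * R * (C0 * wt m' σ)))) ?_ ?_
  · have hmap : Continuous fun p' : Fin n → ℝ =>
        ((x, p', σ) : (Fin (n+1) → ℝ) × (Fin n → ℝ) × ℝ) := by fun_prop
    exact ((Jt_cont hN hm hR hC00 ha0 ℏ).comp hmap).aestronglyMeasurable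
  · exact Filter.Eventually.of_forall fun p' => Jt_ind_bound hN hm hR hC00 ha0 ℏ x p' σ

/-! main-term (`a` at `s = 0`, `p₀ = 0`) lemmas -/

lemma a0_cont (hN : Nice n m' R a) :
    Continuous fun z : ((Fin (n+1) → ℝ) × ℝ) × (Fin n → ℝ) =>
      a (0, z.1.1, z.1.1, Fin.cons 0 z.2) z.1.2 := by
  have hc : Continuous fun z : ((Fin (n+1) → ℝ) × ℝ) × (Fin n → ℝ) =>
      ((0, z.2) : ℝ × (Fin n → ℝ)) := by fun_prop
  have hmap : Continuous fun z : ((Fin (n+1) → ℝ) × ℝ) × (Fin n → ℝ) =>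
      ((((0, z.1.1, z.1.1, Fin.cons 0 z.2)) : WW n), z.1.2) := by
    refine Continuous.prodMk ?_ (by fun_prop)
    exact continuous_const.prodMk ((continuous_fst.comp continuous_fst).prodMk
      ((continuous_fst.comp continuous_fst).prodMk (continuous_consFun.comp hc)))
  exact hN.cont.comp hmap

lemma a0_ind_bound (hN : Nice n m' R a) (hC00 : 0 ≤ C0)
    (ha0 : ∀ w σ, ‖a w σ‖ ≤ C0 * wt m' σ) (x : Fin (n+1) → ℝ) (p' : Fin n → ℝ) (σ : ℝ) :
    ‖a (0, x, x, Fin.cons 0 p') σ‖ ≤ iB R p' * (C0 * wt m' σ) := by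
  by_cases hp : p' ∈ Metric.closedBall (0 : Fin n → ℝ) R
  · rw [iB, Set.indicator_of_mem hp, one_mul]
    exact ha0 _ σ
  · have hfar : R < ‖p'‖ := by
      rw [Metric.mem_closedBall, dist_zero_right] at hp
      exact lt_of_not_ge hp
    rw [hN.supp _ σ (lt_of_lt_of_le hfar (norm_ptail_le 0 x x 0 p')), norm_zero]
    have := wt_nonneg m' σ
    exact mul_nonneg iB_nonneg (by positivity)

lemma a0_p'_integrable (hN : Nice n m' R a) (hC00 : 0 ≤ C0)
    (ha0 : ∀ w σ, ‖a w σ‖ ≤ C0 * wt m' σ) (x : Fin (n+1) → ℝ) (σ : ℝ) :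
    Integrable (fun p' : Fin n → ℝ => a (0, x, x, Fin.cons 0 p') σ) := by
  refine Integrable.mono'
    ((iB_integrable (β := Fin n → ℝ) (R := R)).mul_const (C0 * wt m' σ)) ?_ ?_
  · have hmap : Continuous fun p' : Fin n → ℝ =>
        ((((x, σ)) : (Fin (n+1) → ℝ) × ℝ), p') := continuous_const.prodMk continuous_id
    exact ((a0_cont hN).comp hmap).aestronglyMeasurable
  · exact Filter.Eventually.of_forall fun p' => a0_ind_bound hN hC00 ha0 x p' σ

/-! the chain of integral identities -/

lemma chainB (hN : Nice n m' R a) (hm : m' ≤ -4) (hR : 0 ≤ R) (hC00 : 0 ≤ C0)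
    (ha0 : ∀ w σ, ‖a w σ‖ ≤ C0 * wt m' σ) (ℏ : ℝ) (x : Fin (n+1) → ℝ) (σ : ℝ) :
    (∫ p : Fin (n+1) → ℝ, Phi a ℏ x p σ)
      = ∫ p' : Fin n → ℝ, ∫ t : ℝ, Phi a ℏ x (Fin.cons t p') σ := by
  have hMP : MeasurePreserving
      (⇑(MeasurableEquiv.piFinSuccAbove (fun _ : Fin (n+1) => ℝ) 0).symm) volume volume :=
    (volume_preserving_piFinSuccAbove (fun _ : Fin (n+1) => ℝ) 0).symm _
  have h2 : ((fun p => Phi a ℏ x p σ) ∘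
      ⇑(MeasurableEquiv.piFinSuccAbove (fun _ : Fin (n+1) => ℝ) 0).symm)
      = fun z : ℝ × (Fin n → ℝ) => Phi a ℏ x (Fin.cons z.1 z.2) σ := by
    funext z
    obtain ⟨t, p'⟩ := z
    rw [Function.comp_apply, piFinSucc_symm_apply]
  have h1 : (∫ z : ℝ × (Fin n → ℝ), Phi a ℏ x (Fin.cons z.1 z.2) σ)
      = ∫ p, Phi a ℏ x p σ := by
    rw [← h2]
    exact hMP.integral_comp (MeasurableEquiv.measurableEmbedding _)
      (fun p => Phi a ℏ x p σ)
  have hint : Integrable (fun z : ℝ × (Fin n → ℝ) => Phi a ℏ x (Fin.cons z.1 z.2) σ) := by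
    rw [← h2]
    exact (hMP.integrable_comp_emb (MeasurableEquiv.measurableEmbedding _)).2
      (Phi_p_integrable hN hm hR hC00 ha0 ℏ x σ)
  rw [← h1]
  rw [Measure.volume_eq_prod] at hint
  rw [Measure.volume_eq_prod ℝ (Fin n → ℝ), integral_prod _ hint]
  exact integral_integral_swap
    (f := fun t p' => Phi a ℏ x (Fin.cons t p') σ) hint

lemma chainC (hN : Nice n m' R a) (hm : m' ≤ -4) (hR : 0 ≤ R) (hC00 : 0 ≤ C0)
    (ha0 : ∀ w σ, ‖a w σ‖ ≤ C0 * wt m' σ) (ℏ : ℝ) (x : Fin (n+1) → ℝ) :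
    (∫ y : (Fin (n+1) → ℝ) × ℝ, Phi a ℏ x y.1 y.2)
      = ∫ σ : ℝ, ∫ p : Fin (n+1) → ℝ, Phi a ℏ x p σ := by
  have hint := Phi_pair_integrable hN hm hR hC00 ha0 ℏ x
  rw [Measure.volume_eq_prod] at hint
  rw [Measure.volume_eq_prod ((Fin (n+1) → ℝ)) ℝ, integral_prod _ hint]
  exact integral_integral_swap (f := fun p σ => Phi a ℏ x p σ) hint

lemma chainA (hN : Nice n m' R a) (hm : m' ≤ -4) (hR : 0 ≤ R) (hC00 : 0 ≤ C0)
    (ha0 : ∀ w σ, ‖a w σ‖ ≤ C0 * wt m' σ) (ℏ : ℝ) (x : Fin (n+1) → ℝ) :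
    (∫ q : ℝ × (Fin (n+1) → ℝ) × ℝ, oscIntegrand n a ℏ x x ⌈m' / 2 + 1⌉₊ q)
      = ∫ y : (Fin (n+1) → ℝ) × ℝ, Phi a ℏ x y.1 y.2 := by
  have h0 : (∫ q : ℝ × (Fin (n+1) → ℝ) × ℝ, oscIntegrand n a ℏ x x ⌈m' / 2 + 1⌉₊ q)
      = ∫ q, eForm a ℏ x q :=
    integral_congr_ae (Filter.Eventually.of_forall fun q => osc_eq hm a ℏ x q)
  rw [h0]
  have hint := eForm_integrable hN hm hC00 ha0 ℏ x
  rw [Measure.volume_eq_prod] at hint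
  rw [Measure.volume_eq_prod ℝ ((Fin (n+1) → ℝ) × ℝ), integral_prod _ hint]
  have hswap := integral_integral_swap
    (f := fun s (y : (Fin (n+1) → ℝ) × ℝ) => eForm a ℏ x (s, y)) hint
  rw [hswap]
  refine integral_congr_ae (Filter.Eventually.of_forall fun y => ?_)
  obtain ⟨p, σ⟩ := y
  show (∫ s : ℝ, eForm a ℏ x (s, p, σ)) = Phi a ℏ x p σ
  rw [Phi_integral]
  rfl

lemma chainG (hN : Nice n m' R a) (hm : m' ≤ -4) (hR : 0 ≤ R) (hC00 : 0 ≤ C0)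
    (ha0 : ∀ w σ, ‖a w σ‖ ≤ C0 * wt m' σ) (ℏ : ℝ) (x : Fin (n+1) → ℝ) :
    (∫ q : ℝ × (Fin (n+1) → ℝ) × ℝ, oscIntegrand n a ℏ x x ⌈m' / 2 + 1⌉₊ q)
      = ∫ σ : ℝ, ∫ p' : Fin n → ℝ, ∫ t : ℝ, Phi a ℏ x (Fin.cons t p') σ := by
  rw [chainA hN hm hR hC00 ha0 ℏ x, chainC hN hm hR hC00 ha0 ℏ x]
  exact integral_congr_ae (Filter.Eventually.of_forall fun σ =>
    chainB hN hm hR hC00 ha0 ℏ x σ)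

/-! ### σ and x level assembly -/

lemma V2R (hR : 0 ≤ R) : (0:ℝ) ≤ (volume (Metric.closedBall (0 : Fin n → ℝ) R)).toReal :=
  ENNReal.toReal_nonneg

lemma Q_ind_bound (hN : Nice n m' R a) (hm : m' ≤ -4) (hR : 0 ≤ R) (hC00 : 0 ≤ C0)
    (ha0 : ∀ w σ, ‖a w σ‖ ≤ C0 * wt m' σ) (ℏ : ℝ) (x : Fin (n+1) → ℝ) (σ : ℝ) :
    ‖∫ p' : Fin n → ℝ, ∫ t : ℝ, Phi a ℏ x (Fin.cons t p') σ‖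
      ≤ (volume (Metric.closedBall (0 : Fin n → ℝ) R)).toReal
          * (2 * R * (2 * R * (C0 * wt m' σ))) := by
  have h := norm_integral_le_of_le (Jt_p'_integrable hN hm hR hC00 ha0 ℏ x σ)
    ((iB_integrable (β := Fin n → ℝ) (R := R)).mul_const (2 * R * (2 * R * (C0 * wt m' σ))))
    (fun p' => Jt_ind_bound hN hm hR hC00 ha0 ℏ x p' σ)
  rwa [iB_mul_eq, integral_ind_ball] at h

lemma A0_norm_le (hN : Nice n m' R a) (hC00 : 0 ≤ C0)
    (ha0 : ∀ w σ, ‖a w σ‖ ≤ C0 * wt m' σ) (x : Fin (n+1) → ℝ) (σ : ℝ) :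
    ‖∫ p' : Fin n → ℝ, a (0, x, x, Fin.cons 0 p') σ‖
      ≤ (volume (Metric.closedBall (0 : Fin n → ℝ) R)).toReal * (C0 * wt m' σ) := by
  have h := norm_integral_le_of_le (a0_p'_integrable hN hC00 ha0 x σ)
    ((iB_integrable (β := Fin n → ℝ) (R := R)).mul_const (C0 * wt m' σ))
    (a0_ind_bound hN hC00 ha0 x · σ)
  rwa [iB_mul_eq, integral_ind_ball] at h

lemma ContQ (hN : Nice n m' R a) (hm : m' ≤ -4) (hR : 0 ≤ R) (hC00 : 0 ≤ C0)
    (ha0 : ∀ w σ, ‖a w σ‖ ≤ C0 * wt m' σ) (ℏ : ℝ) :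
    Continuous fun z : (Fin (n+1) → ℝ) × ℝ =>
      ∫ p' : Fin n → ℝ, ∫ t : ℝ, Phi a ℏ z.1 (Fin.cons t p') z.2 := by
  have hmap : Continuous fun w : ((Fin (n+1) → ℝ) × ℝ) × (Fin n → ℝ) =>
      ((w.1.1, w.2, w.1.2) : (Fin (n+1) → ℝ) × (Fin n → ℝ) × ℝ) := by fun_prop
  have hg := (Jt_cont hN hm hR hC00 ha0 ℏ).comp hmap
  rw [Function.comp_def] at hg
  refine cont_param_integral hg
    ((iB_integrable (β := Fin n → ℝ) (R := R)).mul_const (2 * R * (2 * R * C0))) ?_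
  rintro ⟨x, σ⟩ p'
  refine le_trans (Jt_ind_bound hN hm hR hC00 ha0 ℏ x p' σ) ?_
  have h1 : C0 * wt m' σ ≤ C0 * 1 :=
    mul_le_mul_of_nonneg_left (wt_le_one (by linarith) σ) hC00
  have h2 : 2 * R * (2 * R * (C0 * wt m' σ)) ≤ 2 * R * (2 * R * C0) := by
    have h3 : (0:ℝ) ≤ 2 * R * (2 * R) := by positivity
    calc 2 * R * (2 * R * (C0 * wt m' σ)) = 2 * R * (2 * R) * (C0 * wt m' σ) := by ring
      _ ≤ 2 * R * (2 * R) * (C0 * 1) := mul_le_mul_of_nonneg_left h1 h3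
      _ = 2 * R * (2 * R * C0) := by ring
  exact mul_le_mul_of_nonneg_left h2 iB_nonneg

lemma ContA0 (hN : Nice n m' R a) (hm : m' ≤ -4) (hC00 : 0 ≤ C0)
    (ha0 : ∀ w σ, ‖a w σ‖ ≤ C0 * wt m' σ) :
    Continuous fun z : (Fin (n+1) → ℝ) × ℝ =>
      ∫ p' : Fin n → ℝ, a (0, z.1, z.1, Fin.cons 0 p') z.2 := by
  refine cont_param_integral (a0_cont hN)
    ((iB_integrable (β := Fin n → ℝ) (R := R)).mul_const C0) ?_
  rintro ⟨x, σ⟩ p'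
  refine le_trans (a0_ind_bound hN hC00 ha0 x p' σ) ?_
  have h1 : C0 * wt m' σ ≤ C0 :=
    (mul_le_mul_of_nonneg_left (wt_le_one (by linarith) σ) hC00).trans_eq (mul_one C0)
  exact mul_le_mul_of_nonneg_left h1 iB_nonneg

lemma Q_σ_integrable (hN : Nice n m' R a) (hm : m' ≤ -4) (hR : 0 ≤ R) (hC00 : 0 ≤ C0)
    (ha0 : ∀ w σ, ‖a w σ‖ ≤ C0 * wt m' σ) (ℏ : ℝ) (x : Fin (n+1) → ℝ) :
    Integrable (fun σ : ℝ => ∫ p' : Fin n → ℝ, ∫ t : ℝ, Phi a ℏ x (Fin.cons t p') σ) := by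
  set V2 := (volume (Metric.closedBall (0 : Fin n → ℝ) R)).toReal with hV2
  have hb : Integrable (fun σ : ℝ => (V2 * (2 * R * (2 * R * C0))) * wt m' σ) :=
    (wt_integrable (show m' ≤ -2 by linarith)).const_mul _
  refine Integrable.mono' hb ?_ ?_
  · have hmap : Continuous fun σ : ℝ => ((x, σ) : (Fin (n+1) → ℝ) × ℝ) :=
      continuous_const.prodMk continuous_id
    exact ((ContQ hN hm hR hC00 ha0 ℏ).comp hmap).aestronglyMeasurable
  · refine Filter.Eventually.of_forall fun σ => ?_
    refine le_trans (Q_ind_bound hN hm hR hC00 ha0 ℏ x σ) (le_of_eq ?_)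
    ring

lemma A0_σ_integrable (hN : Nice n m' R a) (hm : m' ≤ -4) (hC00 : 0 ≤ C0)
    (ha0 : ∀ w σ, ‖a w σ‖ ≤ C0 * wt m' σ) (x : Fin (n+1) → ℝ) :
    Integrable (fun σ : ℝ => ∫ p' : Fin n → ℝ, a (0, x, x, Fin.cons 0 p') σ) := by
  set V2 := (volume (Metric.closedBall (0 : Fin n → ℝ) R)).toReal with hV2
  have hb : Integrable (fun σ : ℝ => (V2 * C0) * wt m' σ) :=
    (wt_integrable (show m' ≤ -2 by linarith)).const_mul _
  refine Integrable.mono' hb ?_ ?_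
  · have hmap : Continuous fun σ : ℝ => ((x, σ) : (Fin (n+1) → ℝ) × ℝ) :=
      continuous_const.prodMk continuous_id
    exact ((ContA0 hN hm hC00 ha0).comp hmap).aestronglyMeasurable
  · refine Filter.Eventually.of_forall fun σ => ?_
    refine le_trans (A0_norm_le hN hC00 ha0 x σ) (le_of_eq ?_)
    ring

/-- The core bound with both indicators. -/
lemma core_ind_bound (hN : Nice n m' R a) (hm : m' ≤ -4) (hR : 0 ≤ R)
    {Cc : ℝ} (hCc0 : 0 ≤ Cc)
    (hCc : ∀ ℏ : ℝ, 0 < ℏ → ∀ (x : Fin (n+1) → ℝ) (p' : Fin n → ℝ) (σ : ℝ),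
      ‖(∫ t : ℝ, Phi a ℏ x (Fin.cons t p') σ)
          - (2 * π * ℏ) • a (0, x, x, Fin.cons 0 p') σ‖ ≤ Cc * ℏ ^ (2:ℕ) * wt (m' + 1) σ)
    {ℏ : ℝ} (hℏ : 0 < ℏ) (x : Fin (n+1) → ℝ) (p' : Fin n → ℝ) (σ : ℝ) :
    ‖(∫ t : ℝ, Phi a ℏ x (Fin.cons t p') σ)
        - (2 * π * ℏ) • a (0, x, x, Fin.cons 0 p') σ‖
      ≤ iB R p' * (iB R x * (Cc * ℏ ^ (2:ℕ) * wt (m' + 1) σ)) := by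
  have hw := wt_nonneg (m' + 1) σ
  by_cases hx : x ∈ Metric.closedBall (0 : Fin (n+1) → ℝ) R
  · by_cases hp : p' ∈ Metric.closedBall (0 : Fin n → ℝ) R
    · rw [iB, iB, Set.indicator_of_mem hx, Set.indicator_of_mem hp, one_mul, one_mul]
      exact hCc ℏ hℏ x p' σ
    · have hfar : ¬(‖x‖ ≤ R ∧ ‖p'‖ ≤ R) := by
        rw [Metric.mem_closedBall, dist_zero_right] at hp
        intro h; exact hp h.2
      obtain ⟨h1, h2⟩ := core_vanish hN hfar ℏ σ
      rw [h1, h2, smul_zero, sub_zero, norm_zero]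
      exact mul_nonneg iB_nonneg (mul_nonneg iB_nonneg (by positivity))
  · have hfar : ¬(‖x‖ ≤ R ∧ ‖p'‖ ≤ R) := by
      rw [Metric.mem_closedBall, dist_zero_right] at hx
      intro h; exact hx h.1
    obtain ⟨h1, h2⟩ := core_vanish hN hfar ℏ σ
    rw [h1, h2, smul_zero, sub_zero, norm_zero]
    exact mul_nonneg iB_nonneg (mul_nonneg iB_nonneg (by positivity))

lemma level_p' (hN : Nice n m' R a) (hm : m' ≤ -4) (hR : 0 ≤ R) (hC00 : 0 ≤ C0)
    (ha0 : ∀ w σ, ‖a w σ‖ ≤ C0 * wt m' σ)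
    {Cc : ℝ} (hCc0 : 0 ≤ Cc)
    (hCc : ∀ ℏ : ℝ, 0 < ℏ → ∀ (x : Fin (n+1) → ℝ) (p' : Fin n → ℝ) (σ : ℝ),
      ‖(∫ t : ℝ, Phi a ℏ x (Fin.cons t p') σ)
          - (2 * π * ℏ) • a (0, x, x, Fin.cons 0 p') σ‖ ≤ Cc * ℏ ^ (2:ℕ) * wt (m' + 1) σ)
    {ℏ : ℝ} (hℏ : 0 < ℏ) (x : Fin (n+1) → ℝ) (σ : ℝ) :
    ‖(∫ p' : Fin n → ℝ, ∫ t : ℝ, Phi a ℏ x (Fin.cons t p') σ)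
        - (2 * π * ℏ) • ∫ p' : Fin n → ℝ, a (0, x, x, Fin.cons 0 p') σ‖
      ≤ (volume (Metric.closedBall (0 : Fin n → ℝ) R)).toReal
          * (iB R x * (Cc * ℏ ^ (2:ℕ) * wt (m' + 1) σ)) := by
  have hJt := Jt_p'_integrable hN hm hR hC00 ha0 ℏ x σ
  have hA0 : Integrable (fun p' : Fin n → ℝ => (2 * π * ℏ) • a (0, x, x, Fin.cons 0 p') σ) :=
    (a0_p'_integrable hN hC00 ha0 x σ).smul ((2:ℝ) * π * ℏ)
  rw [← integral_smul ((2:ℝ) * π * ℏ) (fun p' => a (0, x, x, Fin.cons 0 p') σ),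
    ← integral_sub hJt hA0]
  have h := norm_integral_le_of_le (hJt.sub hA0)
    ((iB_integrable (β := Fin n → ℝ) (R := R)).mul_const
      (iB R x * (Cc * ℏ ^ (2:ℕ) * wt (m' + 1) σ)))
    (fun p' => core_ind_bound hN hm hR hCc0 hCc hℏ x p' σ)
  rwa [iB_mul_eq, integral_ind_ball] at h

lemma level_σ (hN : Nice n m' R a) (hm : m' ≤ -4) (hR : 0 ≤ R) (hC00 : 0 ≤ C0)
    (ha0 : ∀ w σ, ‖a w σ‖ ≤ C0 * wt m' σ)
    {Cc : ℝ} (hCc0 : 0 ≤ Cc)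
    (hCc : ∀ ℏ : ℝ, 0 < ℏ → ∀ (x : Fin (n+1) → ℝ) (p' : Fin n → ℝ) (σ : ℝ),
      ‖(∫ t : ℝ, Phi a ℏ x (Fin.cons t p') σ)
          - (2 * π * ℏ) • a (0, x, x, Fin.cons 0 p') σ‖ ≤ Cc * ℏ ^ (2:ℕ) * wt (m' + 1) σ)
    {ℏ : ℝ} (hℏ : 0 < ℏ) (x : Fin (n+1) → ℝ) :
    ‖(∫ σ : ℝ, ∫ p' : Fin n → ℝ, ∫ t : ℝ, Phi a ℏ x (Fin.cons t p') σ)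
        - (2 * π * ℏ) • ∫ σ : ℝ, ∫ p' : Fin n → ℝ, a (0, x, x, Fin.cons 0 p') σ‖
      ≤ iB R x * ((volume (Metric.closedBall (0 : Fin n → ℝ) R)).toReal
          * (Cc * ℏ ^ (2:ℕ)) * ∫ σ : ℝ, wt (m' + 1) σ) := by
  set V2 := (volume (Metric.closedBall (0 : Fin n → ℝ) R)).toReal with hV2
  have hV20 : 0 ≤ V2 := ENNReal.toReal_nonneg
  have hQσ := Q_σ_integrable hN hm hR hC00 ha0 ℏ x
  have hA0σ : Integrable (fun σ : ℝ =>
      (2 * π * ℏ) • ∫ p' : Fin n → ℝ, a (0, x, x, Fin.cons 0 p') σ) :=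
    (A0_σ_integrable hN hm hC00 ha0 x).smul ((2:ℝ) * π * ℏ)
  rw [← integral_smul ((2:ℝ) * π * ℏ), ← integral_sub hQσ hA0σ]
  have hwint : Integrable (fun σ : ℝ => (V2 * (iB R x * (Cc * ℏ ^ (2:ℕ)))) * wt (m'+1) σ) :=
    (wt_integrable (show m' + 1 ≤ -2 by linarith)).const_mul _
  have h := norm_integral_le_of_le (hQσ.sub hA0σ) hwint ?_
  · rw [integral_const_mul] at h
    refine le_trans h (le_of_eq ?_)
    ring
  · intro σ
    refine le_trans (level_p' hN hm hR hC00 ha0 hCc0 hCc hℏ x σ) (le_of_eq ?_)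
    ring

lemma G1_zero_far (hN : Nice n m' R a) {x : Fin (n+1) → ℝ} (hx : R < ‖x‖) (ℏ : ℝ) :
    (∫ σ : ℝ, ∫ p' : Fin n → ℝ, ∫ t : ℝ, Phi a ℏ x (Fin.cons t p') σ) = 0 := by
  have h : ∀ σ (p' : Fin n → ℝ) (t : ℝ), Phi a ℏ x (Fin.cons t p') σ = 0 :=
    fun σ p' t => Phi_zero_of_far hN (Or.inl hx) ℏ
  simp only [h, integral_zero]

lemma H1_zero_far (hN : Nice n m' R a) {x : Fin (n+1) → ℝ} (hx : R < ‖x‖) :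
    (∫ σ : ℝ, ∫ p' : Fin n → ℝ, a (0, x, x, Fin.cons 0 p') σ) = 0 := by
  have h : ∀ σ (p' : Fin n → ℝ), a (0, x, x, Fin.cons 0 p') σ = 0 :=
    fun σ p' => hN.supp _ σ (lt_of_lt_of_le hx (norm_x_le 0 x x _))
  simp only [h, integral_zero]

lemma G1_integrable (hN : Nice n m' R a) (hm : m' ≤ -4) (hR : 0 ≤ R) (hC00 : 0 ≤ C0)
    (ha0 : ∀ w σ, ‖a w σ‖ ≤ C0 * wt m' σ) (ℏ : ℝ) :
    Integrable (fun x : Fin (n+1) → ℝ =>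
      ∫ σ : ℝ, ∫ p' : Fin n → ℝ, ∫ t : ℝ, Phi a ℏ x (Fin.cons t p') σ) := by
  set V2 := (volume (Metric.closedBall (0 : Fin n → ℝ) R)).toReal with hV2
  set W0 := ∫ σ : ℝ, wt m' σ with hW0
  refine Integrable.mono'
    ((iB_integrable (β := Fin (n+1) → ℝ) (R := R)).mul_const (V2 * (2*R*(2*R*C0)) * W0))
    ?_ ?_
  · refine (cont_param_integral (ContQ hN hm hR hC00 ha0 ℏ)
      ((wt_integrable (show m' ≤ -2 by linarith)).const_mul (V2 * (2*R*(2*R*C0)))) ?_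
      ).aestronglyMeasurable
    intro x σ
    refine le_trans (Q_ind_bound hN hm hR hC00 ha0 ℏ x σ) (le_of_eq ?_)
    ring
  · refine Filter.Eventually.of_forall fun x => ?_
    by_cases hx : x ∈ Metric.closedBall (0 : Fin (n+1) → ℝ) R
    · rw [iB, Set.indicator_of_mem hx, one_mul]
      have h := norm_integral_le_of_le (Q_σ_integrable hN hm hR hC00 ha0 ℏ x)
        ((wt_integrable (show m' ≤ -2 by linarith)).const_mul (V2 * (2*R*(2*R*C0))))
        (fun σ => le_trans (Q_ind_bound hN hm hR hC00 ha0 ℏ x σ) (le_of_eq (by ring)))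
      rwa [integral_const_mul] at h
    · have hx' : R < ‖x‖ := by
        rw [Metric.mem_closedBall, dist_zero_right] at hx
        exact lt_of_not_ge hx
      rw [G1_zero_far hN hx' ℏ, norm_zero]
      have hW00 : 0 ≤ W0 := integral_nonneg fun σ => wt_nonneg m' σ
      have hV20 : 0 ≤ V2 := ENNReal.toReal_nonneg
      exact mul_nonneg iB_nonneg (by positivity)

lemma H1_integrable (hN : Nice n m' R a) (hm : m' ≤ -4) (hR : 0 ≤ R) (hC00 : 0 ≤ C0)
    (ha0 : ∀ w σ, ‖a w σ‖ ≤ C0 * wt m' σ) :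
    Integrable (fun x : Fin (n+1) → ℝ =>
      ∫ σ : ℝ, ∫ p' : Fin n → ℝ, a (0, x, x, Fin.cons 0 p') σ) := by
  set V2 := (volume (Metric.closedBall (0 : Fin n → ℝ) R)).toReal with hV2
  set W0 := ∫ σ : ℝ, wt m' σ with hW0
  refine Integrable.mono'
    ((iB_integrable (β := Fin (n+1) → ℝ) (R := R)).mul_const (V2 * C0 * W0)) ?_ ?_
  · refine (cont_param_integral (ContA0 hN hm hC00 ha0)
      ((wt_integrable (show m' ≤ -2 by linarith)).const_mul (V2 * C0)) ?_
      ).aestronglyMeasurable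
    intro x σ
    refine le_trans (A0_norm_le hN hC00 ha0 x σ) (le_of_eq ?_)
    ring
  · refine Filter.Eventually.of_forall fun x => ?_
    by_cases hx : x ∈ Metric.closedBall (0 : Fin (n+1) → ℝ) R
    · rw [iB, Set.indicator_of_mem hx, one_mul]
      have h := norm_integral_le_of_le (A0_σ_integrable hN hm hC00 ha0 x)
        ((wt_integrable (show m' ≤ -2 by linarith)).const_mul (V2 * C0))
        (fun σ => le_trans (A0_norm_le hN hC00 ha0 x σ) (le_of_eq (by ring)))
      rwa [integral_const_mul] at h
    · have hx' : R < ‖x‖ := by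
        rw [Metric.mem_closedBall, dist_zero_right] at hx
        exact lt_of_not_ge hx
      rw [H1_zero_far hN hx', norm_zero]
      have hW00 : 0 ≤ W0 := integral_nonneg fun σ => wt_nonneg m' σ
      have hV20 : 0 ≤ V2 := ENNReal.toReal_nonneg
      exact mul_nonneg iB_nonneg (by positivity)

/-! main term equals the `aTwo` integral -/

lemma norm_exp_I_mul_ofReal (r : ℝ) : ‖Complex.exp (Complex.I * (r:ℂ))‖ = 1 := by
  rw [Complex.norm_exp]
  simp

lemma aTwo_integrand_integrable (hN : Nice n m' R a) (hm : m' ≤ -4) (hC00 : 0 ≤ C0)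
    (ha0 : ∀ w σ, ‖a w σ‖ ≤ C0 * wt m' σ) (w : WW n) :
    Integrable (fun σ : ℝ => Complex.exp (Complex.I * Complex.ofReal (w.1 * σ)) * a w σ) := by
  refine Integrable.mono' ((wt_integrable (show m' ≤ -2 by linarith)).const_mul C0) ?_ ?_
  · have h1 : Continuous fun σ : ℝ => Complex.exp (Complex.I * Complex.ofReal (w.1 * σ)) := by
      fun_prop
    have hmap : Continuous fun σ : ℝ => ((w, σ) : WW n × ℝ) :=
      continuous_const.prodMk continuous_id
    exact (h1.mul (hN.cont.comp hmap)).aestronglyMeasurable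
  · refine Filter.Eventually.of_forall fun σ => ?_
    rw [norm_mul, norm_exp_I_mul_ofReal, one_mul]
    exact ha0 w σ

lemma a_σ_integrable (hN : Nice n m' R a) (hm : m' ≤ -4) (hC00 : 0 ≤ C0)
    (ha0 : ∀ w σ, ‖a w σ‖ ≤ C0 * wt m' σ) (w : WW n) :
    Integrable (fun σ : ℝ => a w σ) := by
  refine Integrable.mono' ((wt_integrable (show m' ≤ -2 by linarith)).const_mul C0) ?_ ?_
  · have hmap : Continuous fun σ : ℝ => ((w, σ) : WW n × ℝ) :=
      continuous_const.prodMk continuous_id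
    exact (hN.cont.comp hmap).aestronglyMeasurable
  · exact Filter.Eventually.of_forall fun σ => ha0 w σ

lemma aTwo_zero_eq (w : WW n) (hw : w.1 = 0) :
    aTwo n a w = ∫ σ : ℝ, a w σ := by
  unfold aTwo
  refine integral_congr_ae (Filter.Eventually.of_forall fun σ => ?_)
  rw [hw]
  norm_num

lemma H1_eq_aTwo (hN : Nice n m' R a) (hm : m' ≤ -4) (hR : 0 ≤ R) (hC00 : 0 ≤ C0)
    (ha0 : ∀ w σ, ‖a w σ‖ ≤ C0 * wt m' σ) (x : Fin (n+1) → ℝ) :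
    (∫ σ : ℝ, ∫ p' : Fin n → ℝ, a (0, x, x, Fin.cons 0 p') σ)
      = ∫ p' : Fin n → ℝ, aTwo n a (0, x, x, Fin.cons 0 p') := by
  have hint : Integrable (fun z : ℝ × (Fin n → ℝ) => a (0, x, x, Fin.cons 0 z.2) z.1)
      (volume.prod volume) := by
    rw [← Measure.volume_eq_prod]
    have hb : Integrable (fun z : ℝ × (Fin n → ℝ) => (C0 * wt m' z.1) * iB R z.2) := by
      rw [Measure.volume_eq_prod]
      exact Integrable.mul_prod
        ((wt_integrable (show m' ≤ -2 by linarith)).const_mul C0) iB_integrable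
    refine Integrable.mono' hb ?_ ?_
    · have hc : Continuous fun z : ℝ × (Fin n → ℝ) => ((0, z.2) : ℝ × (Fin n → ℝ)) := by
        fun_prop
      have hmap : Continuous fun z : ℝ × (Fin n → ℝ) =>
          ((((0, x, x, Fin.cons 0 z.2)) : WW n), z.1) := by
        refine Continuous.prodMk ?_ continuous_fst
        exact continuous_const.prodMk (continuous_const.prodMk
          (continuous_const.prodMk (continuous_consFun.comp hc)))
      exact (hN.cont.comp hmap).aestronglyMeasurable
    · refine Filter.Eventually.of_forall fun z => ?_
      refine le_trans (a0_ind_bound hN hC00 ha0 x z.2 z.1) (le_of_eq ?_)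
      ring
  have hswap := integral_integral_swap
    (f := fun (σ : ℝ) (p' : Fin n → ℝ) => a (0, x, x, Fin.cons 0 p') σ) hint
  rw [hswap]
  exact integral_congr_ae (Filter.Eventually.of_forall fun p' =>
    (aTwo_zero_eq _ rfl).symm)

lemma aTwo_pair_integrable (hN : Nice n m' R a) (hm : m' ≤ -4) (hR : 0 ≤ R) (hC00 : 0 ≤ C0)
    (ha0 : ∀ w σ, ‖a w σ‖ ≤ C0 * wt m' σ) :
    Integrable (fun q : (Fin (n+1) → ℝ) × (Fin n → ℝ) =>
      aTwo n a (0, q.1, q.1, Fin.cons 0 q.2)) := by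
  set W0 := ∫ σ : ℝ, wt m' σ with hW0
  have hW00 : 0 ≤ W0 := integral_nonneg fun σ => wt_nonneg m' σ
  have hbint : Integrable (fun q : (Fin (n+1) → ℝ) × (Fin n → ℝ) =>
      iB R q.1 * (iB R q.2 * (C0 * W0))) := by
    rw [Measure.volume_eq_prod]
    exact Integrable.mul_prod iB_integrable (iB_integrable.mul_const _)
  refine Integrable.mono' hbint ?_ ?_
  · have heq : (fun q : (Fin (n+1) → ℝ) × (Fin n → ℝ) =>
        aTwo n a (0, q.1, q.1, Fin.cons 0 q.2))
        = fun q => ∫ σ : ℝ, a (0, q.1, q.1, Fin.cons 0 q.2) σ := by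
      funext q; exact aTwo_zero_eq _ rfl
    rw [heq]
    have hcg : Continuous fun z : ((Fin (n+1) → ℝ) × (Fin n → ℝ)) × ℝ =>
        a (0, z.1.1, z.1.1, Fin.cons 0 z.1.2) z.2 := by
      have hc : Continuous fun z : ((Fin (n+1) → ℝ) × (Fin n → ℝ)) × ℝ =>
          ((0, z.1.2) : ℝ × (Fin n → ℝ)) := by fun_prop
      have hmap : Continuous fun z : ((Fin (n+1) → ℝ) × (Fin n → ℝ)) × ℝ =>
          ((((0, z.1.1, z.1.1, Fin.cons 0 z.1.2)) : WW n), z.2) := by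
        refine Continuous.prodMk ?_ continuous_snd
        exact continuous_const.prodMk ((continuous_fst.comp continuous_fst).prodMk
          ((continuous_fst.comp continuous_fst).prodMk (continuous_consFun.comp hc)))
      exact hN.cont.comp hmap
    refine (cont_param_integral hcg
      ((wt_integrable (show m' ≤ -2 by linarith)).const_mul C0) ?_).aestronglyMeasurable
    rintro ⟨x, p'⟩ σ
    exact ha0 _ σ
  · refine Filter.Eventually.of_forall fun q => ?_
    rw [aTwo_zero_eq _ rfl]
    by_cases hq1 : q.1 ∈ Metric.closedBall (0 : Fin (n+1) → ℝ) R
    · by_cases hq2 : q.2 ∈ Metric.closedBall (0 : Fin n → ℝ) R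
      · rw [iB, iB, Set.indicator_of_mem hq1, Set.indicator_of_mem hq2, one_mul, one_mul]
        have h := norm_integral_le_of_le (a_σ_integrable hN hm hC00 ha0 _)
          ((wt_integrable (show m' ≤ -2 by linarith)).const_mul C0)
          (fun σ => ha0 (0, q.1, q.1, Fin.cons 0 q.2) σ)
        rwa [integral_const_mul] at h
      · have hfar : R < ‖q.2‖ := by
          rw [Metric.mem_closedBall, dist_zero_right] at hq2
          exact lt_of_not_ge hq2
        have hz : ∀ σ : ℝ, a (0, q.1, q.1, Fin.cons 0 q.2) σ = 0 := fun σ =>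
          hN.supp _ σ (lt_of_lt_of_le hfar (norm_ptail_le 0 q.1 q.1 0 q.2))
        simp only [hz, integral_zero, norm_zero]
        exact mul_nonneg iB_nonneg (mul_nonneg iB_nonneg (by positivity))
    · have hfar : R < ‖q.1‖ := by
        rw [Metric.mem_closedBall, dist_zero_right] at hq1
        exact lt_of_not_ge hq1
      have hz : ∀ σ : ℝ, a (0, q.1, q.1, Fin.cons 0 q.2) σ = 0 := fun σ =>
        hN.supp _ σ (lt_of_lt_of_le hfar (norm_x_le 0 q.1 q.1 _))
      simp only [hz, integral_zero, norm_zero]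
      exact mul_nonneg iB_nonneg (mul_nonneg iB_nonneg (by positivity))

end Stmt7

/-- trace asymptotics, `m' ≤ -4`: the integral defining `a₂` is
absolutely convergent, and as `ℏ → 0⁺`,
`∫ u_ℏ(x,x) dx = (2π)^{1-(n+1)} ℏ^{1-(n+1)} ∫ a₂(0,x,x,(0,p')) dx dp' + O(ℏ^{2-(n+1)})`. -/
theorem statement7 (n : ℕ) (m' : ℝ)
    (a : (ℝ × (Fin (n+1) → ℝ) × (Fin (n+1) → ℝ) × (Fin (n+1) → ℝ)) → ℝ → ℂ)
    (ha : IsAmplitude n m' a) (hm : m' ≤ -4) :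
    (∀ w, Integrable (fun σ : ℝ => Complex.exp (Complex.I * Complex.ofReal (w.1 * σ)) * a w σ)) ∧
    ∃ C > (0 : ℝ), ∃ ℏ₀ > (0 : ℝ), ∀ ℏ : ℝ, 0 < ℏ → ℏ ≤ ℏ₀ →
      ‖(∫ x : Fin (n+1) → ℝ, uh n m' a ℏ x x) -
          Complex.ofReal ((2 * π) ^ (1 - ((n : ℝ) + 1)) * ℏ ^ (1 - ((n : ℝ) + 1))) *
            ∫ q : (Fin (n+1) → ℝ) × (Fin n → ℝ),
              aTwo n a (0, q.1, q.1, Fin.cons 0 q.2)‖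
        ≤ C * ℏ ^ (2 - ((n : ℝ) + 1)) := by
  classical
  obtain ⟨R, hR, hN⟩ := Stmt7.nice_of_amp ha
  obtain ⟨C0, hC00, ha0⟩ := hN.norm_le
  constructor
  · exact fun w => Stmt7.aTwo_integrand_integrable hN hm hC00 ha0 w
  obtain ⟨Cc, hCc0, hCc⟩ := Stmt7.core hN hm hR
  set V1 := (volume (Metric.closedBall (0 : Fin (n+1) → ℝ) R)).toReal with hV1
  set V2 := (volume (Metric.closedBall (0 : Fin n → ℝ) R)).toReal with hV2
  set W1 := ∫ σ : ℝ, Stmt7.wt (m'+1) σ with hW1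
  have hV10 : 0 ≤ V1 := ENNReal.toReal_nonneg
  have hV20 : 0 ≤ V2 := ENNReal.toReal_nonneg
  have hW10 : 0 ≤ W1 := integral_nonneg fun σ => Stmt7.wt_nonneg _ σ
  have h2π : (0:ℝ) < 2 * π := by positivity
  refine ⟨(V1 * (V2 * Cc * W1) + 1) * (2*π) ^ (-((n:ℤ)+1)),
    mul_pos (by positivity) (zpow_pos h2π _), 1, one_pos, fun ℏ hℏ hℏ1 => ?_⟩
  have hc : (0:ℝ) < 2*π*ℏ := by positivity
  -- rewrite the trace via the Fubini chain
  have hT : (∫ x : Fin (n+1) → ℝ, uh n m' a ℏ x x)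
      = Complex.ofReal ((2*π*ℏ) ^ (-((n:ℤ)+1))) *
        ∫ x : Fin (n+1) → ℝ, ∫ σ : ℝ, ∫ p' : Fin n → ℝ, ∫ t : ℝ,
          Stmt7.Phi a ℏ x (Fin.cons t p') σ := by
    have hfun : (fun x : Fin (n+1) → ℝ => uh n m' a ℏ x x) = fun x =>
        Complex.ofReal ((2*π*ℏ) ^ (-((n:ℤ)+1))) *
          ∫ σ : ℝ, ∫ p' : Fin n → ℝ, ∫ t : ℝ, Stmt7.Phi a ℏ x (Fin.cons t p') σ := by
      funext x
      show Complex.ofReal ((2 * π * ℏ) ^ (-((n : ℤ) + 1))) *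
          (∫ q, oscIntegrand n a ℏ x x (⌈m' / 2 + 1⌉₊) q) = _
      rw [Stmt7.chainG hN hm hR.le hC00 ha0 ℏ x]
    rw [hfun]
    exact integral_const_mul _ _
  -- the main term
  have hpair := Stmt7.aTwo_pair_integrable hN hm hR.le hC00 ha0
  rw [Measure.volume_eq_prod] at hpair
  have hH : (∫ x : Fin (n+1) → ℝ, ∫ σ : ℝ, ∫ p' : Fin n → ℝ,
      a (0, x, x, Fin.cons 0 p') σ)
      = ∫ q : (Fin (n+1) → ℝ) × (Fin n → ℝ), aTwo n a (0, q.1, q.1, Fin.cons 0 q.2) := by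
    have h1 : (∫ x : Fin (n+1) → ℝ, ∫ σ : ℝ, ∫ p' : Fin n → ℝ,
        a (0, x, x, Fin.cons 0 p') σ)
        = ∫ x : Fin (n+1) → ℝ, ∫ p' : Fin n → ℝ, aTwo n a (0, x, x, Fin.cons 0 p') :=
      integral_congr_ae (Filter.Eventually.of_forall fun x =>
        Stmt7.H1_eq_aTwo hN hm hR.le hC00 ha0 x)
    rw [h1, Measure.volume_eq_prod ((Fin (n+1) → ℝ)) ((Fin n → ℝ)), integral_prod _ hpair]
  -- the difference estimate
  have hG1 := Stmt7.G1_integrable hN hm hR.le hC00 ha0 ℏ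
  have hH1s : Integrable (fun x : Fin (n+1) → ℝ => (2*π*ℏ) •
      ∫ σ : ℝ, ∫ p' : Fin n → ℝ, a (0, x, x, Fin.cons 0 p') σ) :=
    (Stmt7.H1_integrable hN hm hR.le hC00 ha0).smul ((2:ℝ)*π*ℏ)
  have hdiff : ‖(∫ x : Fin (n+1) → ℝ, ∫ σ : ℝ, ∫ p' : Fin n → ℝ, ∫ t : ℝ,
        Stmt7.Phi a ℏ x (Fin.cons t p') σ)
      - (2*π*ℏ) • ∫ x : Fin (n+1) → ℝ, ∫ σ : ℝ, ∫ p' : Fin n → ℝ,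
        a (0, x, x, Fin.cons 0 p') σ‖
      ≤ V1 * (V2 * (Cc * ℏ^(2:ℕ)) * W1) := by
    rw [← integral_smul ((2:ℝ)*π*ℏ), ← integral_sub hG1 hH1s]
    have h := Stmt7.norm_integral_le_of_le (hG1.sub hH1s)
      ((Stmt7.iB_integrable (β := Fin (n+1) → ℝ) (R := R)).mul_const
        (V2 * (Cc * ℏ^(2:ℕ)) * W1))
      (fun x => Stmt7.level_σ hN hm hR.le hC00 ha0 hCc0 hCc hℏ x)
    rwa [Stmt7.iB_mul_eq, Stmt7.integral_ind_ball] at h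
  -- coefficient identity
  have hcoef : ((2*π : ℝ) ^ (1 - ((n:ℝ)+1)) * ℏ ^ (1 - ((n:ℝ)+1)))
      = (2*π*ℏ) ^ (-((n:ℤ)+1)) * (2*π*ℏ) := by
    have he : (1 - ((n:ℝ)+1)) = ((-(n:ℤ) : ℤ) : ℝ) := by push_cast; ring
    rw [he, Real.rpow_intCast, Real.rpow_intCast]
    have h2 : (2*π*ℏ) ^ (-((n:ℤ)+1)) * (2*π*ℏ)
        = (2*π*ℏ) ^ (-((n:ℤ)+1)) * (2*π*ℏ) ^ (1:ℤ) := by rw [zpow_one]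
    rw [h2, ← zpow_add₀ hc.ne', show -((n:ℤ)+1) + 1 = -(n:ℤ) by ring, mul_zpow, mul_zpow, mul_zpow]
  have hcoefC : Complex.ofReal ((2*π : ℝ) ^ (1 - ((n:ℝ)+1)) * ℏ ^ (1 - ((n:ℝ)+1))) *
      (∫ q : (Fin (n+1) → ℝ) × (Fin n → ℝ), aTwo n a (0, q.1, q.1, Fin.cons 0 q.2))
      = Complex.ofReal ((2*π*ℏ) ^ (-((n:ℤ)+1))) *
        ((2*π*ℏ) • ∫ x : Fin (n+1) → ℝ, ∫ σ : ℝ, ∫ p' : Fin n → ℝ,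
          a (0, x, x, Fin.cons 0 p') σ) := by
    rw [← hH, Complex.real_smul, ← mul_assoc, ← Complex.ofReal_mul, hcoef]
  rw [hT, hcoefC, ← mul_sub, norm_mul, Complex.norm_real, Real.norm_eq_abs,
    _root_.abs_of_pos (zpow_pos hc _)]
  have hle := mul_le_mul_of_nonneg_left hdiff (le_of_lt (zpow_pos hc (-((n:ℤ)+1))))
  refine le_trans hle ?_
  -- final arithmetic
  have hz1 : ℏ ^ ((2:ℝ) - ((n:ℝ)+1)) = ℏ^(-((n:ℤ)+1)) * ℏ^(2:ℕ) := by
    rw [show ((2:ℝ) - ((n:ℝ)+1)) = (((-((n:ℤ)+1) + ((2:ℕ):ℤ)) : ℤ) : ℝ) by push_cast; ring,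
      Real.rpow_intCast, zpow_add₀ hℏ.ne', zpow_natCast]
  have hrpos : (0:ℝ) ≤ (2*π) ^ (-((n:ℤ)+1)) * ℏ ^ ((2:ℝ) - ((n:ℝ)+1)) := by
    have := zpow_pos h2π (-((n:ℤ)+1))
    have := Real.rpow_nonneg hℏ.le ((2:ℝ) - ((n:ℝ)+1))
    positivity
  calc (2*π*ℏ) ^ (-((n:ℤ)+1)) * (V1 * (V2 * (Cc * ℏ^(2:ℕ)) * W1))
      = (V1 * (V2 * Cc * W1)) * ((2*π) ^ (-((n:ℤ)+1)) * (ℏ^(-((n:ℤ)+1)) * ℏ^(2:ℕ))) := by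
        rw [mul_zpow]
        ring
    _ = (V1 * (V2 * Cc * W1)) * ((2*π) ^ (-((n:ℤ)+1)) * ℏ ^ ((2:ℝ) - ((n:ℝ)+1))) := by
        rw [hz1]
    _ ≤ (V1 * (V2 * Cc * W1) + 1) * ((2*π) ^ (-((n:ℤ)+1)) * ℏ ^ ((2:ℝ) - ((n:ℝ)+1))) := by
        refine mul_le_mul_of_nonneg_right (by linarith) hrpos
    _ = (V1 * (V2 * Cc * W1) + 1) * (2*π) ^ (-((n:ℤ)+1)) * ℏ ^ ((2:ℝ) - ((n:ℝ)+1)) := by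
        ring
end
end

section
/- Fix integers d ≥ 0 and k ≥ 1. Let G : ℝ^d × ℝ × ℝ → ℝ, written G(v,θ,τ), be smooth and 2π-periodic in θ, i.e. G(v,θ+2π,τ) = G(v,θ,τ) for all (v,θ,τ). Define G̃ : ℝ^d × ℂ → ℝ by G̃(v,z) = |z|^{2k} · G(v, arg z, |z|²) for z ≠ 0 and G̃(v,0) = 0 (by the 2π-periodicity of G in θ this value is independent of the choice of branch of the argument arg z). Then G̃ is of class C^k on ℝ^d × ℂ (identifying ℂ with ℝ²). -/
open Real

noncomputable section

set_option linter.unusedSectionVars false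
set_option maxHeartbeats 1000000

namespace S8

open Complex Filter Topology ContinuousLinearMap

variable {d : ℕ} {E : Type} [NormedAddCommGroup E] [NormedSpace ℝ E]

theorem per_shift (H : (Fin d → ℝ) × ℝ × ℝ → E)
    (hper : ∀ v θ τ, H (v, θ + 2 * π, τ) = H (v, θ, τ))
    (v : Fin d → ℝ) (r θ₀ : ℝ) {z : ℂ} (hz : z ≠ 0) :
    H (v, θ₀ + Complex.arg (Complex.exp (-(θ₀ : ℂ) * Complex.I) * z), r)
      = H (v, Complex.arg z, r) := by
  have hp : Function.Periodic (fun θ => H (v, θ, r)) (2 * π) := fun θ => hper v θ r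
  have h2π : 0 < 2 * π := by positivity
  have hzc : Complex.exp (-(θ₀ : ℂ) * Complex.I) * z
      = ((‖z‖ : ℝ) : ℂ)
          * Complex.exp (((Complex.arg z - θ₀ : ℝ) : ℂ) * Complex.I) := by
    conv_lhs => rw [← Complex.norm_mul_exp_arg_mul_I z]
    rw [mul_comm, mul_assoc, ← Complex.exp_add]
    congr 2
    push_cast
    ring
  have harg : Complex.arg (Complex.exp (-(θ₀ : ℂ) * Complex.I) * z)
      = toIocMod h2π (-π) (Complex.arg z - θ₀) := by
    rw [hzc, Complex.arg_real_mul _ (norm_pos_iff.mpr hz)]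
    exact Complex.arg_exp_mul_I _
  set n := toIocDiv h2π (-π) (Complex.arg z - θ₀) with hn
  have hmod : θ₀ + Complex.arg (Complex.exp (-(θ₀ : ℂ) * Complex.I) * z)
      = Complex.arg z - n * (2 * π) := by
    have h := self_sub_toIocMod h2π (-π) (Complex.arg z - θ₀)
    rw [zsmul_eq_mul] at h
    rw [harg]
    linarith [h]
  rw [hmod]
  exact hp.sub_int_mul_eq n

/-- The function in logarithmic coordinates. -/
def Psi (H : (Fin d → ℝ) × ℝ × ℝ → E) (M : ℕ) (θ₀ : ℝ) : (Fin d → ℝ) × ℂ → E :=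
  fun p => Real.exp (M * p.2.re) • H (p.1, θ₀ + p.2.im, Real.exp p.2.re)

theorem psi_smooth (H : (Fin d → ℝ) × ℝ × ℝ → E) (hH : ContDiff ℝ (⊤ : ℕ∞) H)
    (M : ℕ) (θ₀ : ℝ) : ContDiff ℝ (⊤ : ℕ∞) (Psi H M θ₀) := by
  have hre : ContDiff ℝ (⊤ : ℕ∞) (fun p : (Fin d → ℝ) × ℂ => p.2.re) :=
    Complex.reCLM.contDiff.comp contDiff_snd
  have him : ContDiff ℝ (⊤ : ℕ∞) (fun p : (Fin d → ℝ) × ℂ => p.2.im) :=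
    Complex.imCLM.contDiff.comp contDiff_snd
  apply ContDiff.smul
  · exact Real.contDiff_exp.comp (contDiff_const.mul hre)
  · exact hH.comp (contDiff_fst.prodMk ((contDiff_const.add him).prodMk
      (Real.contDiff_exp.comp hre)))

theorem psi_eq (H : (Fin d → ℝ) × ℝ × ℝ → E)
    (hper : ∀ v θ τ, H (v, θ + 2 * π, τ) = H (v, θ, τ)) (M : ℕ) (θ₀ : ℝ)
    {w : (Fin d → ℝ) × ℂ} (hw : w.2 ≠ 0) :
    (‖w.2‖) ^ M • H (w.1, Complex.arg w.2, ‖w.2‖)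
      = Psi H M θ₀ (w.1, Complex.log (Complex.exp (-(θ₀ : ℂ) * Complex.I) * w.2)) := by
  have habs : ‖Complex.exp (-(θ₀ : ℂ) * Complex.I) * w.2‖ = ‖w.2‖ := by
    rw [norm_mul]
    have : (-(θ₀ : ℂ)) = ((-θ₀ : ℝ) : ℂ) := by push_cast; ring
    rw [this, Complex.norm_exp_ofReal_mul_I, one_mul]
  have hzc : Complex.exp (-(θ₀ : ℂ) * Complex.I) * w.2 ≠ 0 :=
    mul_ne_zero (Complex.exp_ne_zero _) hw
  unfold Psi
  rw [Complex.log_re, Complex.log_im, habs,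
    Real.exp_nat_mul, Real.exp_log (norm_pos_iff.mpr hw),
    per_shift H hper _ _ _ hw]

theorem exp_neg_arg_mul_self {z : ℂ} (hz : z ≠ 0) :
    Complex.exp (-(Complex.arg z : ℂ) * Complex.I) * z = ((‖z‖ : ℝ) : ℂ) := by
  set θ := Complex.arg z with hθ
  have h : z = ((‖z‖ : ℝ) : ℂ) * Complex.exp ((θ : ℂ) * Complex.I) :=
    (Complex.norm_mul_exp_arg_mul_I z).symm
  calc Complex.exp (-(θ : ℂ) * Complex.I) * z
      = ((‖z‖ : ℝ) : ℂ)
        * (Complex.exp (-(θ : ℂ) * Complex.I) * Complex.exp ((θ : ℂ) * Complex.I)) := by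
        conv_lhs => rw [h]
        ring
    _ = ((‖z‖ : ℝ) : ℂ) := by
        rw [← Complex.exp_add]
        have : -(θ : ℂ) * Complex.I + (θ : ℂ) * Complex.I = 0 := by ring
        rw [this, Complex.exp_zero, mul_one]

theorem slit {z : ℂ} (hz : z ≠ 0) :
    Complex.exp (-(Complex.arg z : ℂ) * Complex.I) * z ∈ Complex.slitPlane := by
  rw [exp_neg_arg_mul_self hz]
  exact Or.inl (by simpa using norm_pos_iff.mpr hz)

theorem contDiffAt_off (H : (Fin d → ℝ) × ℝ × ℝ → E) (hH : ContDiff ℝ (⊤ : ℕ∞) H)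
    (hper : ∀ v θ τ, H (v, θ + 2 * π, τ) = H (v, θ, τ)) (M : ℕ)
    {v : Fin d → ℝ} {z : ℂ} (hz : z ≠ 0) :
    ContDiffAt ℝ (⊤ : ℕ∞) (fun w : (Fin d → ℝ) × ℂ =>
      if w.2 = 0 then 0 else (‖w.2‖) ^ M • H (w.1, Complex.arg w.2, ‖w.2‖))
      (v, z) := by
  set θ₀ := Complex.arg z with hθ₀
  set c := Complex.exp (-(θ₀ : ℂ) * Complex.I) with hc
  have hslit : c * z ∈ Complex.slitPlane := slit hz
  have hQ : ContDiffAt ℝ (⊤ : ℕ∞)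
      (fun w : (Fin d → ℝ) × ℂ => (w.1, Complex.log (c * w.2))) (v, z) := by
    apply ContDiffAt.prodMk contDiffAt_fst
    exact ((Complex.contDiffAt_log hslit).restrict_scalars ℝ).comp (v, z)
      ((contDiff_const.mul contDiff_snd).contDiffAt)
  have hmain : ContDiffAt ℝ (⊤ : ℕ∞)
      (fun w : (Fin d → ℝ) × ℂ => Psi H M θ₀ (w.1, Complex.log (c * w.2))) (v, z) :=
    (psi_smooth H hH M θ₀).contDiffAt.comp (v, z) hQ
  apply hmain.congr_of_eventuallyEq
  have hopen : {w : (Fin d → ℝ) × ℂ | w.2 ≠ 0} ∈ 𝓝 (v, z) := by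
    apply IsOpen.mem_nhds
    · exact isOpen_compl_singleton.preimage continuous_snd
    · exact hz
  filter_upwards [hopen] with w hw
  rw [if_neg hw, psi_eq H hper M θ₀ hw]


/-- `(v,ζ) ↦ ζ.re` as a CLM. -/
def rCLM (d : ℕ) : (Fin d → ℝ) × ℂ →L[ℝ] ℝ :=
  Complex.reCLM.comp (ContinuousLinearMap.snd ℝ (Fin d → ℝ) ℂ)

def iCLM (d : ℕ) : (Fin d → ℝ) × ℂ →L[ℝ] ℝ :=
  Complex.imCLM.comp (ContinuousLinearMap.snd ℝ (Fin d → ℝ) ℂ)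

def L1 (d : ℕ) : (Fin d → ℝ) × ℂ →L[ℝ] (Fin d → ℝ) × ℝ × ℝ :=
  (ContinuousLinearMap.inl ℝ (Fin d → ℝ) (ℝ × ℝ)).comp
    (ContinuousLinearMap.fst ℝ (Fin d → ℝ) ℂ)

def j2 (d : ℕ) : ℝ →L[ℝ] (Fin d → ℝ) × ℝ × ℝ :=
  (ContinuousLinearMap.inr ℝ (Fin d → ℝ) (ℝ × ℝ)).comp (ContinuousLinearMap.inl ℝ ℝ ℝ)

def j3 (d : ℕ) : ℝ →L[ℝ] (Fin d → ℝ) × ℝ × ℝ :=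
  (ContinuousLinearMap.inr ℝ (Fin d → ℝ) (ℝ × ℝ)).comp (ContinuousLinearMap.inr ℝ ℝ ℝ)

/-- The linear-map part of the derivative. -/
def ell (d : ℕ) (θ r : ℝ) : (Fin d → ℝ) × ℂ →L[ℝ] (Fin d → ℝ) × ℝ × ℝ :=
  r • L1 d + Real.cos θ • ((j2 d).comp (iCLM d)) + (-Real.sin θ) • ((j2 d).comp (rCLM d))
    + (r * Real.cos θ) • ((j3 d).comp (rCLM d)) + (r * Real.sin θ) • ((j3 d).comp (iCLM d))

/-- The CLM-valued function appearing as derivative of `|z|^{M+1} H(v, arg z, |z|)`,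
with `a = M+1`. -/
def Kmap (H : (Fin d → ℝ) × ℝ × ℝ → E) (a : ℝ) :
    (Fin d → ℝ) × ℝ × ℝ → ((Fin d → ℝ) × ℂ →L[ℝ] E) := fun p =>
  ((a * Real.cos p.2.1) • rCLM d + (a * Real.sin p.2.1) • iCLM d).smulRight (H p)
    + (fderiv ℝ H p).comp (ell d p.2.1 p.2.2)

theorem ell_apply (θ r : ℝ) (u : Fin d → ℝ) (ζ : ℂ) :
    ell d θ r (u, ζ) = (r • u, Real.cos θ * ζ.im - Real.sin θ * ζ.re,
      r * Real.cos θ * ζ.re + r * Real.sin θ * ζ.im) := by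
  simp [ell, L1, j2, j3, rCLM, iCLM, Prod.ext_iff]
  ring

theorem Kmap_apply (H : (Fin d → ℝ) × ℝ × ℝ → E) (a : ℝ) (p : (Fin d → ℝ) × ℝ × ℝ)
    (u : Fin d → ℝ) (ζ : ℂ) :
    Kmap H a p (u, ζ) = (a * Real.cos p.2.1 * ζ.re + a * Real.sin p.2.1 * ζ.im) • H p
      + fderiv ℝ H p (p.2.2 • u, Real.cos p.2.1 * ζ.im - Real.sin p.2.1 * ζ.re,
          p.2.2 * Real.cos p.2.1 * ζ.re + p.2.2 * Real.sin p.2.1 * ζ.im) := by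
  simp [Kmap, rCLM, iCLM, ell_apply]

theorem Kmap_smooth (H : (Fin d → ℝ) × ℝ × ℝ → E) (hH : ContDiff ℝ (⊤ : ℕ∞) H) (a : ℝ) :
    ContDiff ℝ (⊤ : ℕ∞) (Kmap H a) := by
  have hθ : ContDiff ℝ (⊤ : ℕ∞) (fun p : (Fin d → ℝ) × ℝ × ℝ => p.2.1) :=
    (contDiff_fst.comp contDiff_snd)
  have hr : ContDiff ℝ (⊤ : ℕ∞) (fun p : (Fin d → ℝ) × ℝ × ℝ => p.2.2) :=
    (contDiff_snd.comp contDiff_snd)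
  have hcos := Real.contDiff_cos.comp hθ
  have hsin := Real.contDiff_sin.comp hθ
  apply ContDiff.add
  · apply ContDiff.smulRight
    · exact ((contDiff_const.mul hcos).smul contDiff_const).add
        ((contDiff_const.mul hsin).smul contDiff_const)
    · exact hH
  · apply ContDiff.clm_comp
    · exact hH.fderiv_right (by simp)
    · unfold ell
      exact ((((hr.smul contDiff_const).add (hcos.smul contDiff_const)).add
        (hsin.neg.smul contDiff_const)).add ((hr.mul hcos).smul contDiff_const)).add
        ((hr.mul hsin).smul contDiff_const)

theorem fderiv_per (H : (Fin d → ℝ) × ℝ × ℝ → E) (hH : ContDiff ℝ (⊤ : ℕ∞) H)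
    (hper : ∀ v θ τ, H (v, θ + 2 * π, τ) = H (v, θ, τ)) (v : Fin d → ℝ) (θ τ : ℝ) :
    fderiv ℝ H (v, θ + 2 * π, τ) = fderiv ℝ H (v, θ, τ) := by
  have hdiff : Differentiable ℝ H := hH.differentiable (by simp)
  set c : (Fin d → ℝ) × ℝ × ℝ := (0, 2 * π, 0) with hc
  have hT : (H ∘ fun w : (Fin d → ℝ) × ℝ × ℝ => w + c) = H := by
    funext w
    have : w + c = (w.1, w.2.1 + 2 * π, w.2.2) := by
      simp [hc, Prod.ext_iff]
    rw [Function.comp_apply, this, hper]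
  have h1 : fderiv ℝ H (v, θ, τ) = fderiv ℝ (H ∘ fun w => w + c) (v, θ, τ) := by rw [hT]
  have h2 : fderiv ℝ (H ∘ fun w : (Fin d → ℝ) × ℝ × ℝ => w + c) (v, θ, τ)
      = (fderiv ℝ H ((v, θ, τ) + c)).comp (fderiv ℝ (fun w => w + c) (v, θ, τ)) :=
    fderiv_comp _ (hdiff _) (differentiable_id.add_const c).differentiableAt
  have h3 : fderiv ℝ (fun w : (Fin d → ℝ) × ℝ × ℝ => w + c) (v, θ, τ)
      = ContinuousLinearMap.id ℝ _ := by
    rw [show (fun w : (Fin d → ℝ) × ℝ × ℝ => w + c) = (fun w => id w + c) from rfl,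
      fderiv_add_const, fderiv_id]
  have h4 : (v, θ, τ) + c = (v, θ + 2 * π, τ) := by simp [hc, Prod.ext_iff]
  rw [h1, h2, h3, h4, ContinuousLinearMap.comp_id]

theorem Kmap_per (H : (Fin d → ℝ) × ℝ × ℝ → E) (hH : ContDiff ℝ (⊤ : ℕ∞) H)
    (hper : ∀ v θ τ, H (v, θ + 2 * π, τ) = H (v, θ, τ)) (a : ℝ) (v : Fin d → ℝ) (θ τ : ℝ) :
    Kmap H a (v, θ + 2 * π, τ) = Kmap H a (v, θ, τ) := by
  unfold Kmap ell
  simp only [Real.cos_add_two_pi, Real.sin_add_two_pi]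
  rw [hper, fderiv_per H hH hper]


theorem hasfderiv_off (H : (Fin d → ℝ) × ℝ × ℝ → E) (hH : ContDiff ℝ (⊤ : ℕ∞) H)
    (hper : ∀ v θ τ, H (v, θ + 2 * π, τ) = H (v, θ, τ)) (M : ℕ)
    {v : Fin d → ℝ} {z : ℂ} (hz : z ≠ 0) :
    HasFDerivAt (fun w : (Fin d → ℝ) × ℂ =>
        if w.2 = 0 then 0
        else (‖w.2‖) ^ (M + 1) • H (w.1, Complex.arg w.2, ‖w.2‖))
      ((‖z‖ ^ M) •
        Kmap H ((M + 1 : ℕ) : ℝ) (v, Complex.arg z, ‖z‖)) (v, z) := by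
  set θ₀ := Complex.arg z with hθ₀
  set c := Complex.exp (-(θ₀ : ℂ) * Complex.I) with hc
  set r := ‖z‖ with hrdef
  have hr : 0 < r := norm_pos_iff.mpr hz
  have hcz : c * z = ((r : ℝ) : ℂ) := exp_neg_arg_mul_self hz
  have hslit : c * z ∈ Complex.slitPlane := slit hz
  set a : ℝ := ((M + 1 : ℕ) : ℝ) with ha
  -- derivative of the inner map w ↦ (w.1, log (c * w.2))
  have hinner : HasFDerivAt (fun w : (Fin d → ℝ) × ℂ => c * w.2)
      ((c • (1 : ℂ →L[ℝ] ℂ)).comp (ContinuousLinearMap.snd ℝ (Fin d → ℝ) ℂ)) (v, z) := by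
    have h := ((c • (1 : ℂ →L[ℝ] ℂ)).comp
      (ContinuousLinearMap.snd ℝ (Fin d → ℝ) ℂ)).hasFDerivAt (x := (v, z))
    convert h using 1
    funext w
    simp [smul_eq_mul]
  have hlog : HasFDerivAt Complex.log ((c * z)⁻¹ • (1 : ℂ →L[ℝ] ℂ)) (c * z) :=
    (Complex.hasStrictFDerivAt_log_real hslit).hasFDerivAt
  have hQ2 : HasFDerivAt (fun w : (Fin d → ℝ) × ℂ => Complex.log (c * w.2))
      (((c * z)⁻¹ • (1 : ℂ →L[ℝ] ℂ)).comp ((c • (1 : ℂ →L[ℝ] ℂ)).comp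
        (ContinuousLinearMap.snd ℝ (Fin d → ℝ) ℂ))) (v, z) := by
    have h := hlog.comp (v, z) hinner
    simpa [Function.comp_def] using h
  have hQ : HasFDerivAt (fun w : (Fin d → ℝ) × ℂ => (w.1, Complex.log (c * w.2)))
      ((ContinuousLinearMap.fst ℝ (Fin d → ℝ) ℂ).prod
        (((c * z)⁻¹ • (1 : ℂ →L[ℝ] ℂ)).comp ((c • (1 : ℂ →L[ℝ] ℂ)).comp
          (ContinuousLinearMap.snd ℝ (Fin d → ℝ) ℂ)))) (v, z) :=
    hasFDerivAt_fst.prodMk hQ2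
  -- the point in logarithmic coordinates
  set q : (Fin d → ℝ) × ℂ := (v, Complex.log (c * z)) with hq
  have hq2 : q.2 = ((Real.log r : ℝ) : ℂ) := by
    rw [hq]
    simp only
    rw [hcz, Complex.ofReal_log hr.le]
  have hq2re : q.2.re = Real.log r := by rw [hq2]; simp
  have hq2im : q.2.im = 0 := by rw [hq2]; simp
  -- derivative of Psi at q
  have hrho : HasFDerivAt (fun p : (Fin d → ℝ) × ℂ => a * p.2.re) (a • rCLM d) q := by
    have h := (a • rCLM d).hasFDerivAt (x := q)
    convert h using 1
    funext p
    simp [rCLM, smul_eq_mul]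
  have hE : HasFDerivAt (fun p : (Fin d → ℝ) × ℂ => Real.exp (a * p.2.re))
      (Real.exp (a * q.2.re) • (a • rCLM d)) q :=
    by have h := (Real.hasDerivAt_exp (a * q.2.re)).comp_hasFDerivAt q hrho; exact h
  have hS2 : HasFDerivAt (fun p : (Fin d → ℝ) × ℂ => θ₀ + p.2.im) (iCLM d) q := by
    have h := ((iCLM d).hasFDerivAt (x := q)).const_add θ₀
    simpa [iCLM] using h
  have hS3 : HasFDerivAt (fun p : (Fin d → ℝ) × ℂ => Real.exp p.2.re)
      (Real.exp q.2.re • rCLM d) q := by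
    refine (Real.hasDerivAt_exp q.2.re).comp_hasFDerivAt (f := fun p : (Fin d → ℝ) × ℂ => p.2.re) q ?_
    have h := (rCLM d).hasFDerivAt (x := q)
    exact h
  have hS : HasFDerivAt (fun p : (Fin d → ℝ) × ℂ => (p.1, θ₀ + p.2.im, Real.exp p.2.re))
      ((ContinuousLinearMap.fst ℝ (Fin d → ℝ) ℂ).prod
        ((iCLM d).prod (Real.exp q.2.re • rCLM d))) q :=
    hasFDerivAt_fst.prodMk (hS2.prodMk hS3)
  have hSq : (q.1, θ₀ + q.2.im, Real.exp q.2.re) = (v, θ₀, r) := by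
    rw [hq2im, hq2re]
    simp [hq, Real.exp_log hr]
  have hHd : DifferentiableAt ℝ H (q.1, θ₀ + q.2.im, Real.exp q.2.re) :=
    hH.differentiable (by simp) _
  have hHS : HasFDerivAt (fun p : (Fin d → ℝ) × ℂ => H (p.1, θ₀ + p.2.im, Real.exp p.2.re))
      ((fderiv ℝ H (v, θ₀, r)).comp
        ((ContinuousLinearMap.fst ℝ (Fin d → ℝ) ℂ).prod
          ((iCLM d).prod (Real.exp q.2.re • rCLM d)))) q := by
    have h := (hHd.hasFDerivAt).comp q hS
    rw [hSq] at h
    simpa [Function.comp_def] using h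
  have hPsi : HasFDerivAt (Psi H (M + 1) θ₀)
      (Real.exp (a * q.2.re) • ((fderiv ℝ H (v, θ₀, r)).comp
          ((ContinuousLinearMap.fst ℝ (Fin d → ℝ) ℂ).prod
            ((iCLM d).prod (Real.exp q.2.re • rCLM d))))
        + (Real.exp (a * q.2.re) • (a • rCLM d)).smulRight
            (H (v, θ₀, r))) q := by
    have h := hE.smul hHS
    rw [hSq] at h
    have hrw : Psi H (M + 1) θ₀ = fun p : (Fin d → ℝ) × ℂ =>
        Real.exp (a * p.2.re) • H (p.1, θ₀ + p.2.im, Real.exp p.2.re) := rfl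
    rw [hrw]
    exact h
  -- total derivative of the composite
  have htot := hPsi.comp (v, z) hQ
  -- replace the function by f using the eventual equality
  have hopen : {w : (Fin d → ℝ) × ℂ | w.2 ≠ 0} ∈ 𝓝 (v, z) :=
    IsOpen.mem_nhds (isOpen_compl_singleton.preimage continuous_snd) hz
  have heq : (fun w : (Fin d → ℝ) × ℂ =>
        if w.2 = 0 then 0
        else (‖w.2‖) ^ (M + 1) • H (w.1, Complex.arg w.2, ‖w.2‖))
      =ᶠ[𝓝 (v, z)]
      (Psi H (M + 1) θ₀ ∘ fun w : (Fin d → ℝ) × ℂ => (w.1, Complex.log (c * w.2))) := by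
    filter_upwards [hopen] with w hw
    rw [Function.comp_apply, if_neg hw]
    exact psi_eq H hper (M + 1) θ₀ hw
  have hfd := htot.congr_of_eventuallyEq heq
  -- now identify the derivative
  have hexp : Real.exp (a * q.2.re) = r ^ (M + 1) := by
    rw [hq2re, ha, Real.exp_nat_mul, Real.exp_log hr]
  have hexp2 : Real.exp q.2.re = r := by rw [hq2re, Real.exp_log hr]
  have hkey : (Real.exp (a * q.2.re) • ((fderiv ℝ H (v, θ₀, r)).comp
          ((ContinuousLinearMap.fst ℝ (Fin d → ℝ) ℂ).prod
            ((iCLM d).prod (Real.exp q.2.re • rCLM d))))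
        + (Real.exp (a * q.2.re) • (a • rCLM d)).smulRight (H (v, θ₀, r))).comp
        ((ContinuousLinearMap.fst ℝ (Fin d → ℝ) ℂ).prod
          (((c * z)⁻¹ • (1 : ℂ →L[ℝ] ℂ)).comp ((c • (1 : ℂ →L[ℝ] ℂ)).comp
            (ContinuousLinearMap.snd ℝ (Fin d → ℝ) ℂ))))
      = (r ^ M) • Kmap H a (v, θ₀, r) := by
    apply ContinuousLinearMap.ext
    rintro ⟨u, ζ⟩
    rw [hexp, hexp2]
    -- compute both sides
    simp only [ContinuousLinearMap.comp_apply, ContinuousLinearMap.add_apply,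
      ContinuousLinearMap.smul_apply, ContinuousLinearMap.prod_apply,
      ContinuousLinearMap.coe_fst', ContinuousLinearMap.coe_snd',
      ContinuousLinearMap.smulRight_apply, ContinuousLinearMap.one_apply,
      Kmap_apply, rCLM, iCLM]
    have hω : ((c * z)⁻¹ • c • ζ : ℂ) = ((r : ℝ) : ℂ)⁻¹ * (c * ζ) := by
      rw [smul_eq_mul, smul_eq_mul, hcz]
    have hcre : c.re = Real.cos θ₀ := by
      rw [hc, show (-(θ₀ : ℂ)) = ((-θ₀ : ℝ) : ℂ) by push_cast; ring,
        Complex.exp_ofReal_mul_I_re, Real.cos_neg]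
    have hcim : c.im = -Real.sin θ₀ := by
      rw [hc, show (-(θ₀ : ℂ)) = ((-θ₀ : ℝ) : ℂ) by push_cast; ring,
        Complex.exp_ofReal_mul_I_im, Real.sin_neg]
    have hωre : ((c * z)⁻¹ • c • ζ : ℂ).re
        = (Real.cos θ₀ * ζ.re + Real.sin θ₀ * ζ.im) / r := by
      rw [hω, ← Complex.ofReal_inv, Complex.re_ofReal_mul, Complex.mul_re, hcre, hcim]
      field_simp
      try ring
    have hωim : ((c * z)⁻¹ • c • ζ : ℂ).im
        = (Real.cos θ₀ * ζ.im - Real.sin θ₀ * ζ.re) / r := by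
      rw [hω, ← Complex.ofReal_inv, Complex.im_ofReal_mul, Complex.mul_im, hcre, hcim]
      field_simp
      try ring
    rw [Complex.reCLM_apply, Complex.imCLM_apply, hωre, hωim]
    rw [show (r • ((Real.cos θ₀ * ζ.re + Real.sin θ₀ * ζ.im) / r) : ℝ)
        = Real.cos θ₀ * ζ.re + Real.sin θ₀ * ζ.im by
      rw [smul_eq_mul]; field_simp]
    have hvec : ((r • u, Real.cos θ₀ * ζ.im - Real.sin θ₀ * ζ.re,
          r * Real.cos θ₀ * ζ.re + r * Real.sin θ₀ * ζ.im) : (Fin d → ℝ) × ℝ × ℝ)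
        = r • ((u, (Real.cos θ₀ * ζ.im - Real.sin θ₀ * ζ.re) / r,
            Real.cos θ₀ * ζ.re + Real.sin θ₀ * ζ.im) : (Fin d → ℝ) × ℝ × ℝ) := by
      simp only [Prod.smul_mk, smul_eq_mul, Prod.mk.injEq, true_and]
      exact ⟨by field_simp, by ring⟩
    rw [hvec, map_smul]
    match_scalars
    · field_simp
      try ring
    · field_simp
      have hr0 : r ≠ 0 := hr.ne'
      have hrr : r * r⁻¹ = 1 := mul_inv_cancel₀ hr0
      linear_combination (Real.cos θ₀ * ζ.re * r ^ M * a + Real.sin θ₀ * ζ.im * r ^ M * a) * hrr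
  rw [hkey] at hfd
  exact hfd


theorem bound (H : (Fin d → ℝ) × ℝ × ℝ → E) (hH : ContDiff ℝ (⊤ : ℕ∞) H) (v₀ : Fin d → ℝ) :
    ∃ C : ℝ, 0 ≤ C ∧ ∀ (v : Fin d → ℝ) (z : ℂ), ‖v - v₀‖ ≤ 1 → ‖z‖ ≤ 1 →
      ‖H (v, Complex.arg z, ‖z‖)‖ ≤ C := by
  obtain ⟨C, hC⟩ := ((isCompact_closedBall v₀ 1).prod
      ((isCompact_Icc (a := -π) (b := π)).prod
        (isCompact_Icc (a := (0 : ℝ)) (b := 1)))).exists_bound_of_continuousOn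
    hH.continuous.continuousOn
  refine ⟨max C 0, le_max_right _ _, fun v z hv hz => ?_⟩
  refine le_trans (hC (v, Complex.arg z, ‖z‖) ?_) (le_max_left _ _)
  refine ⟨?_, ⟨(Complex.neg_pi_lt_arg z).le, Complex.arg_le_pi z⟩, norm_nonneg z, hz⟩
  simpa [Metric.mem_closedBall, dist_eq_norm] using hv

theorem tendsto_zero (H : (Fin d → ℝ) × ℝ × ℝ → E) (hH : ContDiff ℝ (⊤ : ℕ∞) H)
    (M : ℕ) (hM : 1 ≤ M) (v₀ : Fin d → ℝ) :
    Filter.Tendsto (fun w : (Fin d → ℝ) × ℂ =>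
        if w.2 = 0 then 0
        else (‖w.2‖) ^ M • H (w.1, Complex.arg w.2, ‖w.2‖))
      (𝓝 (v₀, (0 : ℂ))) (𝓝 0) := by
  obtain ⟨C, hC0, hC⟩ := bound H hH v₀
  apply squeeze_zero_norm' (a := fun w : (Fin d → ℝ) × ℂ => C * ‖w.2‖)
  · filter_upwards [Metric.closedBall_mem_nhds (v₀, (0 : ℂ)) one_pos] with w hw
    have hd : dist w (v₀, (0 : ℂ)) ≤ 1 := hw
    rw [Prod.dist_eq] at hd
    have h1 : ‖w.1 - v₀‖ ≤ 1 := by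
      rw [← dist_eq_norm]; exact le_trans (le_max_left _ _) hd
    have h2 : ‖w.2‖ ≤ 1 := by
      have := le_trans (le_max_right _ _) hd
      simpa [Complex.dist_eq] using this
    by_cases hw2 : w.2 = 0
    · simp [hw2, hC0]
    · rw [if_neg hw2, norm_smul]
      have hb := hC w.1 w.2 h1 h2
      have habs : ‖(‖w.2‖) ^ M‖ = (‖w.2‖) ^ M := by
        rw [Real.norm_eq_abs, _root_.abs_of_nonneg (pow_nonneg (norm_nonneg _) _)]
      rw [habs]
      calc (‖w.2‖) ^ M * ‖H (w.1, Complex.arg w.2, ‖w.2‖)‖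
          ≤ (‖w.2‖) ^ 1 * C := by
            apply mul_le_mul _ hb (norm_nonneg _) (pow_nonneg (norm_nonneg _) _)
            exact pow_le_pow_of_le_one (norm_nonneg _) h2 hM
        _ = C * ‖w.2‖ := by ring
  · have : Filter.Tendsto (fun w : (Fin d → ℝ) × ℂ => C * ‖w.2‖)
        (𝓝 (v₀, (0 : ℂ))) (𝓝 (C * ‖(0 : ℂ)‖)) :=
      (continuous_const.mul (continuous_norm.comp continuous_snd)).tendsto _
    simpa using this

theorem hasfderiv_zero (H : (Fin d → ℝ) × ℝ × ℝ → E) (hH : ContDiff ℝ (⊤ : ℕ∞) H)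
    (M : ℕ) (hM : 2 ≤ M) (v₀ : Fin d → ℝ) :
    HasFDerivAt (fun w : (Fin d → ℝ) × ℂ =>
        if w.2 = 0 then 0
        else (‖w.2‖) ^ M • H (w.1, Complex.arg w.2, ‖w.2‖))
      (0 : ((Fin d → ℝ) × ℂ) →L[ℝ] E) (v₀, (0 : ℂ)) := by
  obtain ⟨C, hC0, hC⟩ := bound H hH v₀
  rw [hasFDerivAt_iff_isLittleO_nhds_zero]
  rw [Asymptotics.isLittleO_iff]
  intro ε hε
  have hδ : (0 : ℝ) < min 1 (ε / (C + 1)) := lt_min one_pos (by positivity)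
  filter_upwards [Metric.closedBall_mem_nhds (0 : (Fin d → ℝ) × ℂ) hδ] with w hw
  have hd : dist w 0 ≤ min 1 (ε / (C + 1)) := hw
  rw [dist_zero_right, Prod.norm_def] at hd
  have h1 : ‖w.1‖ ≤ 1 := le_trans (le_trans (le_max_left _ _) hd) (min_le_left _ _)
  have h2a : ‖w.2‖ ≤ 1 := by
    have := le_trans (le_trans (le_max_right _ _) hd) (min_le_left _ _)
    simpa using this
  have h2b : ‖w.2‖ ≤ ε / (C + 1) := by
    have := le_trans (le_trans (le_max_right _ _) hd) (min_le_right _ _)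
    simpa using this
  have habs_le : ‖w.2‖ ≤ ‖w‖ := by
    rw [Prod.norm_def]
    simpa using le_max_right ‖w.1‖ ‖w.2‖
  simp only [Prod.snd_add, Prod.fst_add, zero_add, eq_self_iff_true, if_true, sub_zero,
    ContinuousLinearMap.zero_apply]
  by_cases hw2 : w.2 = 0
  · simp only [hw2, eq_self_iff_true, if_true, norm_zero]
    positivity
  · rw [if_neg hw2, norm_smul]
    have hb : ‖H (v₀ + w.1, Complex.arg w.2, ‖w.2‖)‖ ≤ C := by
      apply hC _ _ _ h2a
      simpa using h1
    have habs : ‖(‖w.2‖) ^ M‖ = (‖w.2‖) ^ M := by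
      rw [Real.norm_eq_abs, _root_.abs_of_nonneg (pow_nonneg (norm_nonneg _) _)]
    rw [habs]
    have hpow : (‖w.2‖) ^ M ≤ (‖w.2‖) ^ 2 :=
      pow_le_pow_of_le_one (norm_nonneg _) h2a hM
    have h0 : (0 : ℝ) ≤ ‖w.2‖ := norm_nonneg _
    have hnw : (0 : ℝ) ≤ ‖w‖ := norm_nonneg _
    calc (‖w.2‖) ^ M * ‖H (v₀ + w.1, Complex.arg w.2, ‖w.2‖)‖
        ≤ (‖w.2‖) ^ 2 * C := by
          exact mul_le_mul hpow hb (norm_nonneg _) (pow_nonneg h0 _)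
      _ ≤ ε * ‖w‖ := by
          have hC1 : (0 : ℝ) < C + 1 := by positivity
          have key : ‖w.2‖ * C ≤ ε := by
            calc ‖w.2‖ * C ≤ (ε / (C + 1)) * C := by
                  apply mul_le_mul_of_nonneg_right h2b hC0
              _ ≤ ε := by
                  rw [div_mul_eq_mul_div, div_le_iff₀ hC1]
                  nlinarith
          calc (‖w.2‖) ^ 2 * C = ‖w.2‖ * (‖w.2‖ * C) := by ring
            _ ≤ ‖w‖ * ε := by
                apply mul_le_mul habs_le key (by positivity) hnw
            _ = ε * ‖w‖ := by ring


theorem key (d : ℕ) (m : ℕ) :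
    ∀ {E : Type} [NormedAddCommGroup E] [NormedSpace ℝ E]
      (H : (Fin d → ℝ) × ℝ × ℝ → E), ContDiff ℝ (⊤ : ℕ∞) H →
      (∀ v θ τ, H (v, θ + 2 * π, τ) = H (v, θ, τ)) →
      ContDiff ℝ (m : ℕ∞) (fun w : (Fin d → ℝ) × ℂ =>
        if w.2 = 0 then 0
        else (‖w.2‖) ^ (m + 1) • H (w.1, Complex.arg w.2, ‖w.2‖)) := by
  induction m with
  | zero =>
    intro E _ _ H hH hper
    have h0 : ((0 : ℕ) : ℕ∞) = (0 : ℕ∞) := by norm_cast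
    rw [h0]
    rw [show ((0 : ℕ∞) : WithTop ℕ∞) = 0 by norm_cast, contDiff_zero]
    rw [continuous_iff_continuousAt]
    rintro ⟨v, z⟩
    by_cases hz : z = 0
    · subst hz
      have h0' : (if ((v, (0 : ℂ)) : (Fin d → ℝ) × ℂ).2 = 0 then 0
          else (‖((v, (0:ℂ)) : (Fin d → ℝ) × ℂ).2‖) ^ (0 + 1) •
            H (((v, (0:ℂ)) : (Fin d → ℝ) × ℂ).1,
              Complex.arg ((v, (0:ℂ)) : (Fin d → ℝ) × ℂ).2,
              ‖((v, (0:ℂ)) : (Fin d → ℝ) × ℂ).2‖)) = (0 : E) := by simp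
      rw [ContinuousAt, h0']
      exact tendsto_zero H hH (0 + 1) le_rfl v
    · exact (contDiffAt_off H hH hper (0 + 1) hz).continuousAt
  | succ m IH =>
    intro E _ _ H hH hper
    have hdiff : Differentiable ℝ (fun w : (Fin d → ℝ) × ℂ =>
        if w.2 = 0 then 0
        else (‖w.2‖) ^ (m + 1 + 1) • H (w.1, Complex.arg w.2, ‖w.2‖)) := by
      rintro ⟨v, z⟩
      by_cases hz : z = 0
      · subst hz
        exact (hasfderiv_zero H hH (m + 1 + 1) (by omega) v).differentiableAt
      · exact (hasfderiv_off H hH hper (m + 1) hz).differentiableAt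
    have hfd : fderiv ℝ (fun w : (Fin d → ℝ) × ℂ =>
        if w.2 = 0 then 0
        else (‖w.2‖) ^ (m + 1 + 1) • H (w.1, Complex.arg w.2, ‖w.2‖))
        = fun w : (Fin d → ℝ) × ℂ =>
          if w.2 = 0 then 0
          else (‖w.2‖) ^ (m + 1) •
            Kmap H ((m + 1 + 1 : ℕ) : ℝ) (w.1, Complex.arg w.2, ‖w.2‖) := by
      funext w
      by_cases hz : w.2 = 0
      · rw [if_pos hz]
        have hw : w = (w.1, (0 : ℂ)) := by
          rw [← hz]
        rw [hw]
        exact (hasfderiv_zero H hH (m + 1 + 1) (by omega) w.1).fderiv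
      · rw [if_neg hz]
        have h := hasfderiv_off H hH hper (m + 1) (v := w.1) hz
        rw [show ((w.1, w.2) : (Fin d → ℝ) × ℂ) = w from rfl] at h
        exact h.fderiv
    have hK := IH (Kmap H ((m + 1 + 1 : ℕ) : ℝ)) (Kmap_smooth H hH _)
      (fun v θ τ => Kmap_per H hH hper _ v θ τ)
    have hcast : (((m + 1 : ℕ) : ℕ∞) : WithTop ℕ∞) = (((m : ℕ) : ℕ∞) : WithTop ℕ∞) + 1 := by
      push_cast
      rfl
    rw [hcast, contDiff_succ_iff_fderiv]
    refine ⟨hdiff, ?_, ?_⟩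
    · intro h
      exact absurd h (by simp)
    · rw [hfd]
      exact hK


theorem statement8' (d k : ℕ) (hk : 1 ≤ k)
    (G : (Fin d → ℝ) × ℝ × ℝ → ℝ) (hG : ContDiff ℝ (⊤ : ℕ∞) G)
    (hper : ∀ (v : Fin d → ℝ) (θ τ : ℝ), G (v, θ + 2 * π, τ) = G (v, θ, τ)) :
    ContDiff ℝ (k : ℕ∞) (fun w : (Fin d → ℝ) × ℂ =>
      if w.2 = 0 then (0 : ℝ)
      else ‖w.2‖ ^ (2 * k) * G (w.1, Complex.arg w.2, ‖w.2‖ ^ 2)) := by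
  set H : (Fin d → ℝ) × ℝ × ℝ → ℝ := fun p => G (p.1, p.2.1, p.2.2 ^ 2) with hHdef
  have hH : ContDiff ℝ (⊤ : ℕ∞) H := by
    apply hG.comp
    exact contDiff_fst.prodMk ((contDiff_fst.comp contDiff_snd).prodMk
      ((contDiff_snd.comp contDiff_snd).pow 2))
  have hper' : ∀ v θ τ, H (v, θ + 2 * π, τ) = H (v, θ, τ) := fun v θ τ => hper v θ (τ ^ 2)
  have h := key d (2 * k - 1) H hH hper'
  have hfun : (fun w : (Fin d → ℝ) × ℂ =>
      if w.2 = 0 then (0 : ℝ)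
      else ‖w.2‖ ^ (2 * k) * G (w.1, Complex.arg w.2, ‖w.2‖ ^ 2))
      = (fun w : (Fin d → ℝ) × ℂ =>
        if w.2 = 0 then 0
        else (‖w.2‖) ^ (2 * k - 1 + 1) •
          H (w.1, Complex.arg w.2, ‖w.2‖)) := by
    funext w
    by_cases hz : w.2 = 0
    · simp [hz]
    · rw [if_neg hz, if_neg hz, smul_eq_mul, show 2 * k - 1 + 1 = 2 * k from by omega]
  rw [hfun]
  refine h.of_le ?_
  exact_mod_cast Nat.cast_le.mpr (by omega : k ≤ 2 * k - 1)

end S8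

/-- if `G(v,θ,τ)` is smooth and `2π`-periodic in `θ`, then the
function `G̃(v,z) = |z|^{2k} G(v, arg z, |z|²)` (extended by `0` at `z = 0`) is
of class `C^k` on `ℝ^d × ℂ`. -/
theorem statement8 (d k : ℕ) (hk : 1 ≤ k)
    (G : (Fin d → ℝ) × ℝ × ℝ → ℝ) (hG : ContDiff ℝ (⊤ : ℕ∞) G)
    (hper : ∀ (v : Fin d → ℝ) (θ τ : ℝ), G (v, θ + 2 * π, τ) = G (v, θ, τ)) :
    ContDiff ℝ (k : ℕ∞) (fun w : (Fin d → ℝ) × ℂ =>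
      if w.2 = 0 then (0 : ℝ)
      else ‖w.2‖ ^ (2 * k) * G (w.1, Complex.arg w.2, ‖w.2‖ ^ 2)) :=
  S8.statement8' d k hk G hG hper
end
end

section
/- Fix integers d ≥ 0 and k ≥ 1. Let Q : ℝ^d × ℝ × ℝ → ℝ, written Q(v,θ,τ), be smooth and 2π-periodic in θ (Q(v,θ+2π,τ) = Q(v,θ,τ) for all (v,θ,τ)), and suppose there is a smooth function F : ℝ^d × ℝ × ℝ → ℝ such that ∂Q/∂θ(v,θ,τ) = τ^k F(v,θ,τ) for all (v,θ,τ). Then there exist smooth functions G₁ : ℝ^d × ℝ × ℝ → ℝ, 2π-periodic in θ, and G₂ : ℝ^d × ℝ → ℝ (independent of θ) such that Q(v,θ,τ) = τ^k G₁(v,θ,τ) + G₂(v,τ) for all (v,θ,τ). -/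
open Real

noncomputable section

open MeasureTheory intervalIntegral ContinuousLinearMap Metric

section Primitive

variable {E : Type} [NormedAddCommGroup E] [NormedSpace ℝ E] [ProperSpace E]

lemma st10_one_le : (1 : WithTop ℕ∞) ≤ ((⊤ : ℕ∞) : WithTop ℕ∞) := by
  exact_mod_cast le_top

/-- Derivative of the fixed-endpoint parametric integral in the parameter. -/
lemma st10_partA {V : Type} [NormedAddCommGroup V] [NormedSpace ℝ V] [CompleteSpace V]
    {f : E × ℝ → V} (hf : ContDiff ℝ (⊤ : ℕ∞) f) (x₀ : E) (θ₀ : ℝ) :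
    HasFDerivAt (fun x : E => ∫ s in (0:ℝ)..θ₀, f (x, s))
      (∫ s in (0:ℝ)..θ₀, (fderiv ℝ f (x₀, s)).comp (inl ℝ E ℝ)) x₀ := by
  have hfderiv : ContDiff ℝ (⊤ : ℕ∞) (fderiv ℝ f) := hf.fderiv_right (by simp)
  set g : E × ℝ → (E →L[ℝ] V) := fun p => (fderiv ℝ f p).comp (inl ℝ E ℝ) with hg
  have hgc : Continuous g := hfderiv.continuous.clm_comp continuous_const
  have hK : IsCompact ((closedBall x₀ 1) ×ˢ (Set.uIcc 0 θ₀)) :=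
    (isCompact_closedBall x₀ 1).prod isCompact_uIcc
  obtain ⟨M, hM⟩ := hK.exists_bound_of_continuousOn hgc.continuousOn
  apply intervalIntegral.hasFDerivAt_integral_of_dominated_of_fderiv_le
    (F := fun x s => f (x, s)) (F' := fun x s => g (x, s)) (bound := fun _ => M)
    (ball_mem_nhds x₀ one_pos)
  · exact Filter.Eventually.of_forall fun x =>
      (hf.continuous.comp (Continuous.prodMk_right x)).aestronglyMeasurable
  · exact (hf.continuous.comp (Continuous.prodMk_right x₀)).intervalIntegrable _ _
  · have inst : SecondCountableTopologyEither ℝ (E →L[ℝ] V) :=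
      secondCountableTopologyEither_of_left ℝ _
    exact (hgc.comp (Continuous.prodMk_right x₀)).aestronglyMeasurable
  · refine Filter.Eventually.of_forall fun s hs x hx => hM (x, s) ?_
    exact ⟨ball_subset_closedBall hx, Set.uIoc_subset_uIcc hs⟩
  · exact intervalIntegrable_const
  · refine Filter.Eventually.of_forall fun s hs x hx => ?_
    exact ((hf.differentiable (by simp) (x, s)).hasFDerivAt).comp x
      (hasFDerivAt_prodMk_left x s)

/-- Derivative of the moving-endpoint part. -/
lemma st10_partB {V : Type} [NormedAddCommGroup V] [NormedSpace ℝ V] [CompleteSpace V]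
    {f : E × ℝ → V} (hf : Continuous f) (x₀ : E) (θ₀ : ℝ) :
    HasFDerivAt (fun p : E × ℝ => ∫ s in θ₀..p.2, f (p.1, s))
      ((snd ℝ E ℝ).smulRight (f (x₀, θ₀))) (x₀, θ₀) := by
  rw [hasFDerivAt_iff_isLittleO_nhds_zero]
  rw [Asymptotics.isLittleO_iff]
  intro c hc
  obtain ⟨δ, hδ, hfd⟩ := Metric.continuousAt_iff.mp hf.continuousAt c hc
  filter_upwards [Metric.ball_mem_nhds (0 : E × ℝ) hδ] with q hq
  have hq' : dist q 0 < δ := mem_ball.mp hq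
  have hqn : ‖q‖ = dist q 0 := (dist_zero_right q).symm
  have hcont : Continuous fun s : ℝ => f (x₀ + q.1, s) :=
    hf.comp (Continuous.prodMk_right _)
  have hint : IntervalIntegrable (fun s => f (x₀ + q.1, s)) volume θ₀ (θ₀ + q.2) :=
    hcont.intervalIntegrable _ _
  have key : (fun p : E × ℝ => ∫ s in θ₀..p.2, f (p.1, s)) ((x₀, θ₀) + q)
      - (fun p : E × ℝ => ∫ s in θ₀..p.2, f (p.1, s)) (x₀, θ₀)
      - ((snd ℝ E ℝ).smulRight (f (x₀, θ₀))) q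
      = ∫ s in θ₀..(θ₀ + q.2), (f ((x₀ + q.1), s) - f (x₀, θ₀)) := by
    have h1 : ((snd ℝ E ℝ).smulRight (f (x₀, θ₀))) q = q.2 • f (x₀, θ₀) := rfl
    have h2 : (fun p : E × ℝ => ∫ s in θ₀..p.2, f (p.1, s)) ((x₀, θ₀) + q)
        = ∫ s in θ₀..(θ₀ + q.2), f ((x₀ + q.1), s) := rfl
    have h3 : (fun p : E × ℝ => ∫ s in θ₀..p.2, f (p.1, s)) (x₀, θ₀) = 0 :=
      intervalIntegral.integral_same
    rw [h1, h2, h3, sub_zero,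
      intervalIntegral.integral_sub hint intervalIntegrable_const,
      intervalIntegral.integral_const, add_sub_cancel_left]
  rw [key]
  have hb : ∀ s ∈ Set.uIoc θ₀ (θ₀ + q.2), ‖f ((x₀ + q.1), s) - f (x₀, θ₀)‖ ≤ c := by
    intro s hs
    have hd : dist ((x₀ + q.1), s) (x₀, θ₀) < δ := by
      rw [Prod.dist_eq]
      have h1 : dist (x₀ + q.1) x₀ ≤ dist q 0 := by
        rw [dist_eq_norm, add_sub_cancel_left, dist_zero_right]
        exact norm_fst_le q
      have h2 : dist s θ₀ ≤ dist q 0 := by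
        rw [Real.dist_eq, dist_zero_right]
        calc |s - θ₀| ≤ |(θ₀ + q.2) - θ₀| :=
              Set.abs_sub_left_of_mem_uIcc (Set.uIoc_subset_uIcc hs)
          _ = ‖q.2‖ := by rw [add_sub_cancel_left]; rfl
          _ ≤ ‖q‖ := norm_snd_le q
      exact max_lt (lt_of_le_of_lt h1 hq') (lt_of_le_of_lt h2 hq')
    have := hfd hd
    rw [dist_eq_norm] at this
    exact this.le
  calc ‖∫ s in θ₀..(θ₀ + q.2), (f ((x₀ + q.1), s) - f (x₀, θ₀))‖
      ≤ c * |(θ₀ + q.2) - θ₀| := intervalIntegral.norm_integral_le_of_norm_le_const hb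
    _ ≤ c * ‖q‖ := by
        rw [add_sub_cancel_left]
        exact mul_le_mul_of_nonneg_left ((norm_snd_le q)) hc.le

/-- Full derivative of the parametric primitive. -/
lemma st10_hasFDerivAt {V : Type} [NormedAddCommGroup V] [NormedSpace ℝ V] [CompleteSpace V]
    {f : E × ℝ → V} (hf : ContDiff ℝ (⊤ : ℕ∞) f) (p₀ : E × ℝ) :
    HasFDerivAt (fun p : E × ℝ => ∫ s in (0:ℝ)..p.2, f (p.1, s))
      (((∫ s in (0:ℝ)..p₀.2, (fderiv ℝ f (p₀.1, s)).comp (inl ℝ E ℝ)).comp (fst ℝ E ℝ))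
        + (snd ℝ E ℝ).smulRight (f p₀)) p₀ := by
  have hcont : ∀ x : E, Continuous fun s : ℝ => f (x, s) :=
    fun x => hf.continuous.comp (Continuous.prodMk_right x)
  have hA : HasFDerivAt (fun p : E × ℝ => ∫ s in (0:ℝ)..p₀.2, f (p.1, s))
      ((∫ s in (0:ℝ)..p₀.2, (fderiv ℝ f (p₀.1, s)).comp (inl ℝ E ℝ)).comp (fst ℝ E ℝ)) p₀ :=
    (st10_partA hf p₀.1 p₀.2).comp p₀ (hasFDerivAt_fst)
  have hB : HasFDerivAt (fun p : E × ℝ => ∫ s in p₀.2..p.2, f (p.1, s))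
      ((snd ℝ E ℝ).smulRight (f p₀)) p₀ := by
    have := st10_partB hf.continuous p₀.1 p₀.2
    simpa using this
  apply (hA.add hB).congr_of_eventuallyEq
  apply Filter.Eventually.of_forall
  intro p
  exact (intervalIntegral.integral_add_adjacent_intervals
    ((hcont p.1).intervalIntegrable _ _) ((hcont p.1).intervalIntegrable _ _)).symm

/-- Smoothness of the parametric primitive, finite order. -/
lemma st10_contDiff_primitive : ∀ (n : ℕ) {V : Type} [NormedAddCommGroup V]
    [NormedSpace ℝ V] [CompleteSpace V] (f : E × ℝ → V), ContDiff ℝ (⊤ : ℕ∞) f →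
    ContDiff ℝ (n : ℕ) (fun p : E × ℝ => ∫ s in (0:ℝ)..p.2, f (p.1, s)) := by
  intro n
  induction n with
  | zero =>
    intro V _ _ _ f hf
    rw [show ((0 : ℕ) : WithTop ℕ∞) = 0 by norm_cast, contDiff_zero]
    exact intervalIntegral.continuous_parametric_primitive_of_continuous
      (f := fun x s => f (x, s)) (by exact hf.continuous)
  | succ n ih =>
    intro V _ _ _ f hf
    have hn : ((n + 1 : ℕ) : WithTop ℕ∞) = (n : WithTop ℕ∞) + 1 := by norm_cast
    rw [hn, contDiff_succ_iff_fderiv]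
    refine ⟨fun p => (st10_hasFDerivAt hf p).differentiableAt, by simp, ?_⟩
    have heq : fderiv ℝ (fun p : E × ℝ => ∫ s in (0:ℝ)..p.2, f (p.1, s))
        = fun p : E × ℝ =>
          ((∫ s in (0:ℝ)..p.2, (fderiv ℝ f (p.1, s)).comp (inl ℝ E ℝ)).comp (fst ℝ E ℝ))
            + (snd ℝ E ℝ).smulRight (f p) :=
      funext fun p => (st10_hasFDerivAt hf p).fderiv
    rw [heq]
    have hfderiv : ContDiff ℝ (⊤ : ℕ∞) (fderiv ℝ f) := hf.fderiv_right (by simp)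
    have hg : ContDiff ℝ (⊤ : ℕ∞) (fun q : E × ℝ => (fderiv ℝ f q).comp (inl ℝ E ℝ)) :=
      hfderiv.clm_comp contDiff_const
    have hI : ContDiff ℝ (n : ℕ)
        (fun p : E × ℝ => ∫ s in (0:ℝ)..p.2, (fderiv ℝ f (p.1, s)).comp (inl ℝ E ℝ)) :=
      ih _ hg
    have hfn : ContDiff ℝ (n : ℕ) f := hf.of_le (by exact_mod_cast le_top)
    exact (hI.clm_comp contDiff_const).add (contDiff_const.smulRight hfn)

/-- Smoothness of the parametric primitive. -/
lemma st10_contDiff_primitive_top {V : Type} [NormedAddCommGroup V]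
    [NormedSpace ℝ V] [CompleteSpace V] {f : E × ℝ → V} (hf : ContDiff ℝ (⊤ : ℕ∞) f) :
    ContDiff ℝ (⊤ : ℕ∞) (fun p : E × ℝ => ∫ s in (0:ℝ)..p.2, f (p.1, s)) :=
  contDiff_infty.mpr fun n => st10_contDiff_primitive n f hf

end Primitive

/-- if `Q(v,θ,τ)` is smooth, `2π`-periodic in `θ`, and
`∂Q/∂θ = τ^k F` for some smooth `F`, then `Q` decomposes as
`Q(v,θ,τ) = τ^k G₁(v,θ,τ) + G₂(v,τ)` with `G₁` smooth and `2π`-periodic in `θ`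
and `G₂` smooth and independent of `θ`. -/
theorem statement10 (d k : ℕ) (hk : 1 ≤ k)
    (Q F : (Fin d → ℝ) × ℝ × ℝ → ℝ)
    (hQ : ContDiff ℝ (⊤ : ℕ∞) Q) (hF : ContDiff ℝ (⊤ : ℕ∞) F)
    (hper : ∀ (v : Fin d → ℝ) (θ τ : ℝ), Q (v, θ + 2 * π, τ) = Q (v, θ, τ))
    (hbr : ∀ (v : Fin d → ℝ) (θ τ : ℝ),
      deriv (fun θ' => Q (v, θ', τ)) θ = τ ^ k * F (v, θ, τ)) :
    ∃ (G₁ : (Fin d → ℝ) × ℝ × ℝ → ℝ) (G₂ : (Fin d → ℝ) × ℝ → ℝ),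
      ContDiff ℝ (⊤ : ℕ∞) G₁ ∧ ContDiff ℝ (⊤ : ℕ∞) G₂ ∧
      (∀ (v : Fin d → ℝ) (θ τ : ℝ), G₁ (v, θ + 2 * π, τ) = G₁ (v, θ, τ)) ∧
      ∀ (v : Fin d → ℝ) (θ τ : ℝ), Q (v, θ, τ) = τ ^ k * G₁ (v, θ, τ) + G₂ (v, τ) := by
  classical
  -- reorder variables so that `θ` is the last coordinate
  set f : ((Fin d → ℝ) × ℝ) × ℝ → ℝ := fun w => F (w.1.1, w.2, w.1.2) with hf_def
  have hfs : ContDiff ℝ (⊤ : ℕ∞) f :=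
    hF.comp ((contDiff_fst.fst).prodMk ((contDiff_snd).prodMk (contDiff_fst.snd)))
  set g : ((Fin d → ℝ) × ℝ) × ℝ → ℝ := fun p => ∫ s in (0:ℝ)..p.2, f (p.1, s) with hg_def
  have hgs : ContDiff ℝ (⊤ : ℕ∞) g := st10_contDiff_primitive_top hfs
  set G₁ : (Fin d → ℝ) × ℝ × ℝ → ℝ := fun p => g ((p.1, p.2.2), p.2.1) with hG₁_def
  set G₂ : (Fin d → ℝ) × ℝ → ℝ := fun p => Q (p.1, 0, p.2) with hG₂_def
  have hG₁eq : ∀ (v : Fin d → ℝ) (θ τ : ℝ), G₁ (v, θ, τ) = ∫ s in (0:ℝ)..θ, F (v, s, τ) :=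
    fun v θ τ => rfl
  have hG₁s : ContDiff ℝ (⊤ : ℕ∞) G₁ :=
    hgs.comp (((contDiff_fst).prodMk (contDiff_snd.snd)).prodMk (contDiff_snd.fst))
  have hG₂s : ContDiff ℝ (⊤ : ℕ∞) G₂ :=
    hQ.comp ((contDiff_fst).prodMk ((contDiff_const).prodMk contDiff_snd))
  -- the decomposition
  have hdecomp : ∀ (v : Fin d → ℝ) (θ τ : ℝ),
      Q (v, θ, τ) = τ ^ k * G₁ (v, θ, τ) + G₂ (v, τ) := by
    intro v θ τ
    have hQv : ContDiff ℝ (⊤ : ℕ∞) (fun θ' => Q (v, θ', τ)) :=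
      hQ.comp ((contDiff_const).prodMk ((contDiff_id).prodMk contDiff_const))
    have hdiff : Differentiable ℝ (fun θ' => Q (v, θ', τ)) :=
      hQv.differentiable (by simp)
    have hDer : ∀ s ∈ Set.uIcc (0:ℝ) θ,
        HasDerivAt (fun θ' => Q (v, θ', τ)) (τ ^ k * F (v, s, τ)) s := by
      intro s _
      have h := (hdiff s).hasDerivAt
      rwa [hbr v s τ] at h
    have hFc : Continuous fun s : ℝ => F (v, s, τ) :=
      hF.continuous.comp (continuous_const.prodMk (continuous_id.prodMk continuous_const))
    have hint : IntervalIntegrable (fun s => τ ^ k * F (v, s, τ)) volume 0 θ :=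
      (continuous_const.mul hFc).intervalIntegrable _ _
    have hFTC := intervalIntegral.integral_eq_sub_of_hasDerivAt hDer hint
    rw [intervalIntegral.integral_const_mul] at hFTC
    rw [hG₁eq v θ τ]
    have hG₂e : G₂ (v, τ) = Q (v, 0, τ) := rfl
    rw [hG₂e]
    linarith [hFTC]
  -- periodicity of G₁
  have hper' : ∀ (v : Fin d → ℝ) (θ τ : ℝ), G₁ (v, θ + 2 * π, τ) = G₁ (v, θ, τ) := by
    intro v θ τ
    have hψc : Continuous fun t : ℝ => G₁ (v, θ + 2 * π, t) - G₁ (v, θ, t) := by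
      apply Continuous.sub
      · exact hG₁s.continuous.comp
          (continuous_const.prodMk (continuous_const.prodMk continuous_id))
      · exact hG₁s.continuous.comp
          (continuous_const.prodMk (continuous_const.prodMk continuous_id))
    have hψ0 : (fun t : ℝ => G₁ (v, θ + 2 * π, t) - G₁ (v, θ, t)) = fun _ => (0:ℝ) := by
      apply Continuous.ext_on (dense_compl_singleton (0:ℝ)) hψc continuous_const
      intro t ht
      have ht0 : t ≠ 0 := ht
      have h1 := hdecomp v (θ + 2 * π) t
      have h2 := hdecomp v θ t
      rw [hper v θ t] at h1
      have hmul : t ^ k * G₁ (v, θ + 2 * π, t) = t ^ k * G₁ (v, θ, t) := by linarith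
      have := mul_left_cancel₀ (pow_ne_zero k ht0) hmul
      show G₁ (v, θ + 2 * π, t) - G₁ (v, θ, t) = 0
      rw [this, sub_self]
    have h := congrFun hψ0 τ
    have h' : G₁ (v, θ + 2 * π, τ) - G₁ (v, θ, τ) = 0 := h
    linarith
  exact ⟨G₁, G₂, hG₁s, hG₂s, hper', hdecomp⟩
end
end
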